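/- arXiv:1312.1483 — 13 statements merged into one kernel-verified Lean document; each statement's English description precedes it below -/
import Mathlib

section
/- Let d be a positive integer and let μ be a Borel probability measure on ℂ. Then a point z ∈ ℂ belongs to the support of the d-fold rotated measure μ^{(d)} if and only if z^d belongs to the support of μ. -/
open MeasureTheory Complex
open scoped ENNReal

/-- The `k`-th branch of the `d`-th root map: `ψ_k(z) = |z|^{1/d} exp(i (arg z + 2πk)/d)`. -/
noncomputable def dRootBranch (d k : ℕ) (z : ℂ) : ℂ :=
  ((‖z‖ ^ ((d : ℝ)⁻¹) : ℝ) : ℂ) *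
    Complex.exp (Complex.I * (((z.arg + 2 * Real.pi * k) / d : ℝ) : ℂ))

/-- The `d`-fold rotated measure `μ^{(d)} = (1/d) ∑_{k<d} (ψ_k)_* μ`. -/
noncomputable def rotMeasure (d : ℕ) (μ : Measure ℂ) : Measure ℂ :=
  (d : ℝ≥0∞)⁻¹ • ∑ k ∈ Finset.range d, Measure.map (dRootBranch d k) μ

/-- The support of a measure on `ℂ`: the set of points all of whose open neighbourhoods
have positive measure. -/
def msupport (μ : Measure ℂ) : Set ℂ :=
  {z | ∀ U : Set ℂ, IsOpen U → z ∈ U → 0 < μ U}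

lemma dRootBranch_measurable (d k : ℕ) : Measurable (dRootBranch d k) := by
  unfold dRootBranch
  apply Measurable.mul
  · exact Complex.measurable_ofReal.comp
      (((Real.continuous_rpow_const (by positivity)).measurable).comp
        continuous_norm.measurable)
  · exact Complex.measurable_exp.comp <| Measurable.const_mul
      (Complex.measurable_ofReal.comp <|
        ((Complex.measurable_arg.add_const _).div_const _)) _

lemma dRootBranch_pow (d k : ℕ) (hd : 0 < d) (w : ℂ) :
    (dRootBranch d k w) ^ d = w := by
  have hd' : (d : ℝ) ≠ 0 := Nat.cast_ne_zero.mpr hd.ne'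
  unfold dRootBranch
  rw [mul_pow, ← Complex.exp_nat_mul]
  have h1 : (((‖w‖ ^ ((d : ℝ)⁻¹) : ℝ) : ℂ)) ^ d
      = ((‖w‖ : ℝ) : ℂ) := by
    rw [← Complex.ofReal_pow]
    congr 1
    rw [← Real.rpow_natCast (‖w‖ ^ ((d : ℝ)⁻¹)) d,
      ← Real.rpow_mul (norm_nonneg w), inv_mul_cancel₀ hd', Real.rpow_one]
  have h2 : (d : ℂ) * (Complex.I * (((w.arg + 2 * Real.pi * k) / d : ℝ) : ℂ))
      = w.arg * Complex.I + (k : ℤ) * (2 * Real.pi * Complex.I) := by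
    have hdC : (d : ℂ) ≠ 0 := Nat.cast_ne_zero.mpr hd.ne'
    push_cast
    field_simp
  rw [h1, h2, Complex.exp_add, Complex.exp_int_mul_two_pi_mul_I, mul_one,
    Complex.norm_mul_exp_arg_mul_I]

lemma exists_dRootBranch (d : ℕ) (hd : 0 < d) (ζ : ℂ) :
    ∃ k < d, dRootBranch d k (ζ ^ d) = ζ := by
  have hd' : (d : ℝ) ≠ 0 := Nat.cast_ne_zero.mpr hd.ne'
  by_cases hζ : ζ = 0
  · refine ⟨0, hd, ?_⟩
    subst hζ
    simp [dRootBranch, zero_pow hd.ne', Real.zero_rpow (inv_ne_zero hd')]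
  · have hζd : ζ ^ d ≠ 0 := pow_ne_zero d hζ
    -- abs part
    have habs : ((‖ζ ^ d‖) ^ ((d : ℝ)⁻¹) : ℝ) = ‖ζ‖ := by
      rw [norm_pow, ← Real.rpow_natCast (‖ζ‖) d,
        ← Real.rpow_mul (norm_nonneg ζ), mul_inv_cancel₀ hd', Real.rpow_one]
    -- argument congruence: exp (arg (ζ^d) * I) = exp (d * arg ζ * I)
    have hexp : Complex.exp ((Complex.arg (ζ ^ d) : ℂ) * Complex.I)
        = Complex.exp ((d : ℂ) * (Complex.arg ζ : ℂ) * Complex.I) := by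
      have h1 : Complex.exp ((Complex.arg (ζ ^ d) : ℂ) * Complex.I)
          = ζ ^ d / (‖ζ ^ d‖ : ℂ) := by
        rw [eq_div_iff (by exact_mod_cast norm_ne_zero_iff.mpr hζd), mul_comm]
        exact Complex.norm_mul_exp_arg_mul_I (ζ ^ d)
      have h2 : Complex.exp ((d : ℂ) * (Complex.arg ζ : ℂ) * Complex.I)
          = (Complex.exp ((Complex.arg ζ : ℂ) * Complex.I)) ^ d := by
        rw [← Complex.exp_nat_mul]; ring_nf
      have h3 : Complex.exp ((Complex.arg ζ : ℂ) * Complex.I)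
          = ζ / (‖ζ‖ : ℂ) := by
        rw [eq_div_iff (by exact_mod_cast norm_ne_zero_iff.mpr hζ), mul_comm]
        exact Complex.norm_mul_exp_arg_mul_I ζ
      rw [h1, h2, h3, div_pow, norm_pow]
      push_cast
      ring_nf
    obtain ⟨n, hn⟩ := Complex.exp_eq_exp_iff_exists_int.mp hexp
    -- hn : (arg (ζ^d) : ℂ) * I = d * arg ζ * I + n * (2π * I)
    have hreal : (Complex.arg (ζ ^ d) : ℝ) = d * Complex.arg ζ + n * (2 * Real.pi) := by
      have := hn
      have hI : ((Complex.arg (ζ ^ d) : ℂ)) = (d : ℂ) * Complex.arg ζ + n * (2 * Real.pi) := by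
        apply mul_right_cancel₀ Complex.I_ne_zero
        rw [this]; ring
      exact_mod_cast hI
    refine ⟨((-n) % d).toNat, ?_, ?_⟩
    · have h1 : (-n) % (d : ℤ) < d := Int.emod_lt_of_pos _ (by exact_mod_cast hd)
      omega
    · set k : ℕ := ((-n) % d).toNat with hk
      have hkz : (k : ℤ) = (-n) % d := Int.toNat_of_nonneg
        (Int.emod_nonneg _ (by exact_mod_cast hd.ne'))
      unfold dRootBranch
      rw [habs]
      -- angle: (arg (ζ^d) + 2πk)/d = arg ζ + 2π * t with t : ℤ
      set t : ℤ := -((-n) / d) with ht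
      have hangle : ((Complex.arg (ζ ^ d) + 2 * Real.pi * k) / d : ℝ)
          = Complex.arg ζ + 2 * Real.pi * t := by
        have hnk : (n : ℝ) + k = (d : ℝ) * t := by
          have : (n : ℤ) + k = d * t := by
            rw [hkz, ht, Int.emod_def]; ring
          exact_mod_cast this
        rw [hreal]
        field_simp
        linear_combination (2 * Real.pi) * hnk
      rw [hangle]
      have : Complex.I * ((Complex.arg ζ + 2 * Real.pi * t : ℝ) : ℂ)
          = (Complex.arg ζ : ℂ) * Complex.I + t * (2 * Real.pi * Complex.I) := by
        push_cast; ring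
      rw [this, Complex.exp_add, Complex.exp_int_mul_two_pi_mul_I, mul_one,
        Complex.norm_mul_exp_arg_mul_I]

lemma isOpenMap_pow_complex (d : ℕ) (hd : 0 < d) {U : Set ℂ} (hU : IsOpen U) :
    IsOpen ((fun z : ℂ => z ^ d) '' U) := by
  have h := (AnalyticOnNhd.is_constant_or_isOpen (g := fun z : ℂ => z ^ d)
    (U := Set.univ) (fun z _ => (analyticAt_id.pow d)) isPreconnected_univ)
  rcases h with ⟨w, hw⟩ | h
  · exfalso
    have h0 := hw 0 trivial
    have h1 := hw 1 trivial
    simp [zero_pow hd.ne'] at h0 h1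
    rw [← h0] at h1
    exact one_ne_zero h1
  · exact h U (Set.subset_univ U) hU

theorem mem_msupport_rotMeasure_iff (d : ℕ) (hd : 0 < d) (μ : Measure ℂ)
    [IsProbabilityMeasure μ] (z : ℂ) :
    z ∈ msupport (rotMeasure d μ) ↔ z ^ d ∈ msupport μ := by
  constructor
  · intro hz U hU hzU
    by_contra h
    push_neg at h
    have hU0 : μ U = 0 := le_antisymm h zero_le
    set V : Set ℂ := (fun w : ℂ => w ^ d) ⁻¹' U with hV
    have hVopen : IsOpen V := hU.preimage (continuous_pow d)
    have hzV : z ∈ V := hzU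
    have hpos := hz V hVopen hzV
    have : rotMeasure d μ V = 0 := by
      rw [rotMeasure, Measure.smul_apply, Measure.finset_sum_apply]
      have : ∀ k ∈ Finset.range d, Measure.map (dRootBranch d k) μ V = 0 := by
        intro k _
        rw [Measure.map_apply (dRootBranch_measurable d k) hVopen.measurableSet]
        have : dRootBranch d k ⁻¹' V = U := by
          ext w
          simp only [hV, Set.mem_preimage, dRootBranch_pow d k hd w]
        rw [this, hU0]
      rw [Finset.sum_congr rfl this]
      simp
    rw [this] at hpos
    exact lt_irrefl 0 hpos
  · intro hz U hU hzU
    have himg : IsOpen ((fun w : ℂ => w ^ d) '' U) := isOpenMap_pow_complex d hd hU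
    have hmem : z ^ d ∈ (fun w : ℂ => w ^ d) '' U := ⟨z, hzU, rfl⟩
    have hpos := hz _ himg hmem
    have hsub : (fun w : ℂ => w ^ d) '' U ⊆ ⋃ k ∈ Finset.range d, dRootBranch d k ⁻¹' U := by
      rintro w ⟨ζ, hζU, rfl⟩
      obtain ⟨k, hk, hke⟩ := exists_dRootBranch d hd ζ
      exact Set.mem_biUnion (Finset.mem_range.mpr hk) (by simp [hke, hζU])
    have hUn : 0 < μ (⋃ k ∈ Finset.range d, dRootBranch d k ⁻¹' U) :=
      lt_of_lt_of_le hpos (measure_mono hsub)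
    have hle : μ (⋃ k ∈ Finset.range d, dRootBranch d k ⁻¹' U)
        ≤ ∑ k ∈ Finset.range d, μ (dRootBranch d k ⁻¹' U) := measure_biUnion_finset_le _ _
    have hsum : 0 < ∑ k ∈ Finset.range d, μ (dRootBranch d k ⁻¹' U) :=
      lt_of_lt_of_le hUn hle
    rw [rotMeasure, Measure.smul_apply, Measure.finset_sum_apply]
    have heq : ∀ k ∈ Finset.range d, Measure.map (dRootBranch d k) μ U
        = μ (dRootBranch d k ⁻¹' U) := fun k _ =>
      Measure.map_apply (dRootBranch_measurable d k) hU.measurableSet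
    rw [Finset.sum_congr rfl heq]
    have hdinv : (0 : ℝ≥0∞) < (d : ℝ≥0∞)⁻¹ :=
      ENNReal.inv_pos.mpr (ENNReal.natCast_ne_top d)
    exact ENNReal.mul_pos hdinv.ne' hsum.ne'
end

section
/- Let n and d be positive integers with 0 < d < 2n, let r > 0 be real, and let α ∈ ℂ with |α| < 1. Then the map f(u) = r·u·(1 − α/u)^{d/n}, where the complex power is the principal branch (well defined since Re(1 − α/u) > 0 for |u| > 1), is injective on the exterior region {u ∈ ℂ : |u| > 1}. -/
open Complex

private lemma key_real (t ξ η : ℝ) (ht : |t| ≤ 1) (hη : |η| ≤ Real.pi) :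
    Real.exp ξ * ((Real.exp (ξ*t) * Real.cos (η*t) - 1)^2 + (Real.exp (ξ*t) * Real.sin (η*t))^2)
      ≤ Real.exp (ξ*t) * ((Real.exp ξ * Real.cos η - 1)^2 + (Real.exp ξ * Real.sin η)^2) := by
  have ht1 : t ≤ 1 := le_trans (le_abs_self t) ht
  have ht2 : -1 ≤ t := by have := neg_abs_le t; linarith
  have hP : 0 < Real.exp ξ := Real.exp_pos _
  have hQ : 0 < Real.exp (ξ*t) := Real.exp_pos _
  have hc : Real.cos η ≤ Real.cos (η*t) := by
    have h1 : |η*t| ≤ |η| := by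
      rw [abs_mul]
      nlinarith [abs_nonneg η, abs_nonneg t]
    have h2 := Real.cos_le_cos_of_nonneg_of_le_pi (abs_nonneg (η*t)) hη h1
    rwa [Real.cos_abs, Real.cos_abs] at h2
  have hPQ : 0 ≤ (Real.exp ξ - Real.exp (ξ*t)) * (Real.exp ξ * Real.exp (ξ*t) - 1) := by
    rw [← Real.exp_add]
    rcases le_or_gt 0 ξ with h | h
    · have e1 : ξ*t ≤ ξ := by nlinarith
      have e2 : (0:ℝ) ≤ ξ + ξ*t := by nlinarith
      have f1 := Real.exp_le_exp.2 e1
      have f2 := Real.one_le_exp e2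
      have : (0:ℝ) ≤ Real.exp ξ - Real.exp (ξ*t) := by linarith
      have : (0:ℝ) ≤ Real.exp (ξ + ξ*t) - 1 := by linarith
      nlinarith [Real.exp_le_exp.2 e1, Real.one_le_exp e2]
    · have e1 : ξ ≤ ξ*t := by nlinarith
      have e2 : ξ + ξ*t ≤ 0 := by nlinarith
      nlinarith [Real.exp_le_exp.2 e1, Real.exp_le_one_iff.mpr e2]
  have hs1 := Real.sin_sq_add_cos_sq η
  have hs2 := Real.sin_sq_add_cos_sq (η*t)
  have expand :
      Real.exp (ξ*t) * ((Real.exp ξ * Real.cos η - 1)^2 + (Real.exp ξ * Real.sin η)^2)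
        - Real.exp ξ * ((Real.exp (ξ*t) * Real.cos (η*t) - 1)^2 + (Real.exp (ξ*t) * Real.sin (η*t))^2)
      = (Real.exp ξ - Real.exp (ξ*t)) * (Real.exp ξ * Real.exp (ξ*t) - 1)
        + 2 * (Real.exp ξ * Real.exp (ξ*t)) * (Real.cos (η*t) - Real.cos η) := by
    linear_combination (Real.exp (ξ*t) * Real.exp ξ^2) * hs1 - (Real.exp ξ * Real.exp (ξ*t)^2) * hs2
  nlinarith [expand, hPQ, hc, mul_pos hP hQ]

theorem precritical_map_injective (n d : ℕ) (hd : 0 < d) (hdn : d < 2 * n)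
    (r : ℝ) (hr : 0 < r) (α : ℂ) (hα : ‖α‖ < 1) :
    Set.InjOn (fun u : ℂ => (r : ℂ) * u * (1 - α / u) ^ ((d : ℂ) / (n : ℂ)))
      {u : ℂ | 1 < ‖u‖} := by
  have hn : 0 < n := by omega
  intro u hu v hv heq
  simp only [Set.mem_setOf_eq] at hu hv
  simp only at heq
  have hr' : (r : ℂ) ≠ 0 := Complex.ofReal_ne_zero.2 hr.ne'
  rcases eq_or_ne α 0 with hα0 | hα0
  · rw [hα0] at heq
    simp only [zero_div, sub_zero, Complex.one_cpow, mul_one] at heq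
    exact mul_left_cancel₀ hr' heq
  have hu0 : u ≠ 0 := by
    intro h; rw [h] at hu; simp at hu; linarith
  have hv0 : v ≠ 0 := by
    intro h; rw [h] at hv; simp at hv; linarith
  set c : ℂ := (d : ℂ) / (n : ℂ) with hc_def
  set a : ℂ := α / u with ha_def
  set b : ℂ := α / v with hb_def
  have ha1 : ‖a‖ < 1 := by
    rw [ha_def, norm_div]
    rw [div_lt_one (by linarith : (0:ℝ) < ‖u‖)]
    linarith
  have hb1 : ‖b‖ < 1 := by
    rw [hb_def, norm_div]
    rw [div_lt_one (by linarith : (0:ℝ) < ‖v‖)]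
    linarith
  set x : ℂ := 1 - a with hx_def
  set y : ℂ := 1 - b with hy_def
  have hxre : 0 < x.re := by
    have := Complex.re_le_norm a
    simp only [hx_def, Complex.sub_re, Complex.one_re]
    linarith
  have hyre : 0 < y.re := by
    have := Complex.re_le_norm b
    simp only [hy_def, Complex.sub_re, Complex.one_re]
    linarith
  have hx0 : x ≠ 0 := by intro h; rw [h] at hxre; simp at hxre
  have hy0 : y ≠ 0 := by intro h; rw [h] at hyre; simp at hyre
  -- cancel r
  have huv : u * x ^ c = v * y ^ c := by
    apply mul_left_cancel₀ hr'
    rw [← mul_assoc, ← mul_assoc]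
    exact heq
  rw [Complex.cpow_def_of_ne_zero hx0, Complex.cpow_def_of_ne_zero hy0] at huv
  set z : ℂ := Complex.log x - Complex.log y with hz_def
  set E : ℂ := Complex.exp z with hE_def
  set S : ℂ := Complex.exp (z * c) with hS_def
  have hS0 : S ≠ 0 := Complex.exp_ne_zero _
  have hE0 : E ≠ 0 := Complex.exp_ne_zero _
  have hv_eq : u * S = v := by
    have h : u * (S * Complex.exp (Complex.log y * c)) = v * Complex.exp (Complex.log y * c) := by
      rw [hS_def, ← Complex.exp_add, show z * c + Complex.log y * c = Complex.log x * c by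
        rw [hz_def]; ring]
      exact huv
    exact mul_right_cancel₀ (Complex.exp_ne_zero (Complex.log y * c)) (by rw [mul_assoc]; exact h)
  have ha_eq : a = b * S := by
    rw [ha_def, hb_def, ← hv_eq]
    field_simp
  have hx_eq : x = E * y := by
    calc x = Complex.exp (Complex.log x) := (Complex.exp_log hx0).symm
    _ = Complex.exp (z + Complex.log y) := by rw [hz_def]; ring_nf
    _ = E * Complex.exp (Complex.log y) := by rw [Complex.exp_add]
    _ = E * y := by rw [Complex.exp_log hy0]
  have hb_key : 1 - a = E * (1 - b) := by rw [← hx_def, ← hy_def]; exact hx_eq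
  -- exponent real parameter
  set t : ℝ := (d : ℝ) / (n : ℝ) - 1 with ht_def
  have hn' : (0:ℝ) < (n:ℝ) := by exact_mod_cast hn
  have hd' : (0:ℝ) < (d:ℝ) := by exact_mod_cast hd
  have hdn' : (d:ℝ) < 2 * (n:ℝ) := by exact_mod_cast hdn
  have ht1 : |t| ≤ 1 := by
    rw [abs_le]
    constructor
    · rw [ht_def]
      have : 0 < (d:ℝ)/(n:ℝ) := div_pos hd' hn'
      linarith
    · rw [ht_def]
      have : (d:ℝ)/(n:ℝ) < 2 := (div_lt_iff₀ hn').2 (by linarith)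
      linarith
  have hct : c = 1 + (t : ℂ) := by
    rw [hc_def, ht_def]
    push_cast
    ring
  set T : ℂ := Complex.exp (z * (t : ℂ)) with hT_def
  have hT0 : T ≠ 0 := Complex.exp_ne_zero _
  have hST : S = E * T := by
    rw [hS_def, hE_def, hT_def, ← Complex.exp_add, hct]
    ring_nf
  -- key algebraic identities
  have hdia : E - 1 = b * E * (1 - T) := by
    have h1 : a = b * (E * T) := by rw [← hST]; exact ha_eq
    linear_combination (-1 : ℂ) * hb_key - h1
  have hclub : a * (1 - T) = T * (E - 1) := by
    have h1 : a = b * (E * T) := by rw [← hST]; exact ha_eq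
    linear_combination (1 - T) * h1 - T * hdia
  rcases eq_or_ne T 1 with hT1 | hT1
  · -- then E = 1, so a = b, so u = v
    have hE1 : E = 1 := by
      rw [hT1] at hclub
      simp at hclub
      linear_combination -hclub
    have hab : a = b := by
      rw [hE1, one_mul] at hb_key
      linear_combination -hb_key
    rw [ha_def, hb_def] at hab
    rw [div_eq_div_iff hu0 hv0] at hab
    exact (mul_left_cancel₀ hα0 hab).symm
  · exfalso
    have hT1' : T - 1 ≠ 0 := sub_ne_zero.2 hT1
    have habsT1 : 0 < ‖T - 1‖ := by
      simpa using (norm_pos_iff.mpr hT1')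
    have habsE : 0 < ‖E‖ := norm_pos_iff.mpr hE0
    have I1 : ‖E - 1‖ < ‖E‖ * ‖T - 1‖ := by
      have : ‖E - 1‖
          = ‖b‖ * (‖E‖ * ‖T - 1‖) := by
        rw [hdia, norm_mul, norm_mul, norm_sub_rev 1 T]
        ring
      rw [this]
      have hX : 0 < ‖E‖ * ‖T - 1‖ := mul_pos habsE habsT1
      nlinarith [hb1, hX]
    have I2 : ‖T‖ * ‖E - 1‖ < ‖T - 1‖ := by
      have h : ‖a‖ * ‖T - 1‖
          = ‖T‖ * ‖E - 1‖ := by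
        rw [norm_sub_rev T 1, ← norm_mul, hclub, norm_mul]
      rw [← h]
      nlinarith [ha1, habsT1]
    have I3 : ‖T‖ * ‖E - 1‖ ^ 2
        < ‖E‖ * ‖T - 1‖ ^ 2 := by
      nlinarith [mul_lt_mul'' I1 I2 (norm_nonneg _)
        (mul_nonneg (norm_nonneg T) (norm_nonneg _))]
    -- now contradict with key_real
    set ξ : ℝ := z.re with hξ
    set η : ℝ := z.im with hη
    have hre : (z * (t:ℂ)).re = ξ * t := by simp [Complex.mul_re, hξ]
    have him : (z * (t:ℂ)).im = η * t := by simp [Complex.mul_im, hη]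
    have habsEeq : ‖E‖ = Real.exp ξ := by rw [hE_def, Complex.norm_exp]
    have habsTeq : ‖T‖ = Real.exp (ξ * t) := by rw [hT_def, Complex.norm_exp, hre]
    have hE1sq : ‖E - 1‖ ^ 2
        = (Real.exp ξ * Real.cos η - 1)^2 + (Real.exp ξ * Real.sin η)^2 := by
      rw [Complex.sq_norm, Complex.normSq_apply]
      simp only [hE_def, Complex.sub_re, Complex.sub_im, Complex.one_re, Complex.one_im,
        Complex.exp_re, Complex.exp_im]
      ring
    have hT1sq : ‖T - 1‖ ^ 2
        = (Real.exp (ξ*t) * Real.cos (η*t) - 1)^2 + (Real.exp (ξ*t) * Real.sin (η*t))^2 := by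
      rw [Complex.sq_norm, Complex.normSq_apply]
      simp only [hT_def, Complex.sub_re, Complex.sub_im, Complex.one_re, Complex.one_im,
        Complex.exp_re, Complex.exp_im, hre, him]
      ring
    have hηπ : |η| ≤ Real.pi := by
      have hax : |x.arg| < Real.pi / 2 := Complex.abs_arg_lt_pi_div_two_iff.2 (Or.inl hxre)
      have hay : |y.arg| < Real.pi / 2 := Complex.abs_arg_lt_pi_div_two_iff.2 (Or.inl hyre)
      have : η = x.arg - y.arg := by
        rw [hη, hz_def, Complex.sub_im, Complex.log_im, Complex.log_im]
      rw [this]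
      have := abs_sub x.arg y.arg
      linarith
    have I4 := key_real t ξ η ht1 hηπ
    rw [habsEeq, habsTeq, hE1sq, hT1sq] at I3
    linarith
end

section
/- Let α, u ∈ ℂ satisfy |α| < 1 < |u|. Then Re(α/(u − α)) > −1/2. -/
theorem re_key_inequality (α u : ℂ) (hα : ‖α‖ < 1) (hu : 1 < ‖u‖) :
    -(1 / 2 : ℝ) < (α / (u - α)).re := by
  have hw : u - α ≠ 0 := by
    intro h
    have : u = α := sub_eq_zero.mp h
    rw [this] at hu
    linarith
  have hN : 0 < Complex.normSq (u - α) := Complex.normSq_pos.mpr hw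
  have h1 : α.re ^ 2 + α.im ^ 2 < 1 := by
    have := Complex.sq_norm α
    nlinarith [Complex.normSq_apply α, norm_nonneg α]
  have h2 : 1 < u.re ^ 2 + u.im ^ 2 := by
    have := Complex.sq_norm u
    nlinarith [Complex.normSq_apply u, norm_nonneg u]
  rw [Complex.div_re, Complex.normSq_apply] at *
  rw [← add_div, neg_lt, ← neg_div, div_lt_iff₀ hN]
  simp only [Complex.sub_re, Complex.sub_im] at *
  nlinarith [hN, h1, h2]
end

section
/- Let n and d be positive integers with 0 < d < 2n, let r > 0 be real, and let α ∈ ℂ with 0 < |α| < 1. Then the map f(u) = r·(u − 1/conj(α))·(1 − α/u)^{d/n − 1}, where the complex power is the principal branch (well defined since Re(1 − α/u) > 0 for |u| ≥ 1, α ≠ u), is injective on the closed exterior region {u ∈ ℂ : |u| ≥ 1}. -/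
open Complex Set MeasureTheory intervalIntegral

set_option maxHeartbeats 2000000

/-- Any logarithm of `ζ` is at least as large as the principal one. -/
lemma abs_log_le_of_exp_eq {w ζ : ℂ} (h : Complex.exp w = ζ) :
    ‖Complex.log ζ‖ ≤ ‖w‖ := by
  have hζ : ζ ≠ 0 := h ▸ Complex.exp_ne_zero w
  have h2 : Complex.exp w = Complex.exp (Complex.log ζ) := by
    rw [h, Complex.exp_log hζ]
  obtain ⟨k, hk⟩ := Complex.exp_eq_exp_iff_exists_int.mp h2
  have hre : w.re = (Complex.log ζ).re := by rw [hk]; simp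
  have him : w.im = (Complex.log ζ).im + (k : ℝ) * (2 * Real.pi) := by
    rw [hk]; simp
  set a := (Complex.log ζ).im with ha
  have hapi : |a| ≤ Real.pi := by
    rw [ha, Complex.log_im]; exact Complex.abs_arg_le_pi ζ
  set K := (k : ℝ) * (2 * Real.pi) with hKdef
  have hsq : a ^ 2 ≤ (a + K) ^ 2 := by
    rcases eq_or_ne k 0 with hk0 | hk0
    · simp [hKdef, hk0]
    · have h1 : (1 : ℝ) ≤ |(k : ℝ)| := by
        rw [← Int.cast_abs]; exact_mod_cast Int.one_le_abs hk0
      have hπ : 0 < Real.pi := Real.pi_pos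
      have habsK : 2 * Real.pi ≤ |K| := by
        rw [hKdef, abs_mul, abs_of_pos (by linarith : (0:ℝ) < 2 * Real.pi)]
        nlinarith
      have ha1 := (abs_le.mp hapi).1
      have ha2 := (abs_le.mp hapi).2
      rcases le_or_gt 0 K with hKs | hKs
      · have hKabs : |K| = K := abs_of_nonneg hKs
        nlinarith
      · have hKabs : |K| = -K := abs_of_neg hKs
        nlinarith
  have hsq2 : ‖Complex.log ζ‖ ^ 2 ≤ ‖w‖ ^ 2 := by
    rw [Complex.sq_norm, Complex.sq_norm, Complex.normSq_apply, Complex.normSq_apply, hre, him]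
    nlinarith [hsq]
  nlinarith [norm_nonneg (Complex.log ζ), norm_nonneg w, hsq2]

/-- log triangle inequality through an intermediate point -/
lemma abs_log_div_le {x y z : ℂ} (hx : x ≠ 0) (hy : y ≠ 0) (hz : z ≠ 0) :
    ‖Complex.log (z / x)‖ ≤
      ‖Complex.log (z / y)‖ + ‖Complex.log (y / x)‖ := by
  have hexp : Complex.exp (Complex.log (z / y) + Complex.log (y / x)) = z / x := by
    rw [Complex.exp_add, Complex.exp_log (div_ne_zero hz hy),
      Complex.exp_log (div_ne_zero hy hx)]
    field_simp
  exact le_trans (abs_log_le_of_exp_eq hexp) (norm_add_le _ _)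

/-- the key algebraic identity -/
lemma key_identity (α u : ℂ) :
    Complex.normSq u * Complex.normSq (u - α) - Complex.normSq (1 - (starRingEnd ℂ) α * u)
      = (Complex.normSq u - 1) * (Complex.normSq u + 1 - 2 * ((starRingEnd ℂ) α * u).re) := by
  simp only [Complex.normSq_apply, Complex.sub_re, Complex.sub_im, Complex.mul_re,
    Complex.mul_im, Complex.conj_re, Complex.conj_im, Complex.one_re, Complex.one_im]
  ring

lemma collar_real (c ε A m R N : ℝ) (hc : c < 1) (hc0 : 0 ≤ c) (hε0 : 0 < ε)
    (hε : ε ≤ (1 - c) / 2) (hA : 1 - ε ≤ A) (hm : A - c ≤ m) (hN0 : 0 ≤ N)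
    (hRe : |R| ≤ c * A)
    (hid : N ^ 2 = A ^ 2 * m ^ 2 - (A ^ 2 - 1) * (A ^ 2 + 1 - 2 * R))
    (hfacid : A ^ 2 + 1 - 2 * R = m ^ 2 + 1 - c ^ 2) :
    N ≤ (1 + 80 * ε / (1 - c) ^ 2) * (A * m) := by
  have hcsq : (0:ℝ) < (1 - c) ^ 2 := by nlinarith
  set x := 80 * ε / (1 - c) ^ 2 with hxdef
  have hx0 : 0 ≤ x := div_nonneg (by linarith) hcsq.le
  have hA0 : (1 + c) / 2 ≤ A := by linarith
  have hApos : 0 < A := by linarith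
  have hm0 : (1 - c) / 2 ≤ m := by linarith
  have hmpos : 0 < m := by linarith
  have hfac : 0 ≤ A ^ 2 + 1 - 2 * R := by rw [hfacid]; nlinarith
  have hAM : 0 < A * m := mul_pos hApos hmpos
  clear_value x
  rcases le_or_gt 1 A with h1A | h1A
  · have hsq : N ^ 2 ≤ A ^ 2 * m ^ 2 := by
      nlinarith [mul_nonneg (by nlinarith : (0:ℝ) ≤ A ^ 2 - 1) hfac]
    have hmain : N ≤ A * m := by nlinarith
    nlinarith
  · have hA1 : 1 - A ≤ ε := by linarith
    have hsecond : (1 - A ^ 2) * (A ^ 2 + 1 - 2 * R) ≤ 10 * ε := by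
      have e1 : (1 - A) * (1 + A) ≤ ε * (1 + A) :=
        mul_le_mul_of_nonneg_right hA1 (by linarith)
      have e2 : ε * (1 + A) ≤ ε * 2 := mul_le_mul_of_nonneg_left (by linarith) hε0.le
      have h1 : 1 - A ^ 2 ≤ 2 * ε := by nlinarith
      have hcA : c * A ≤ 1 := by nlinarith
      have h2 : A ^ 2 + 1 - 2 * R ≤ 5 := by
        have h3 := (abs_le.mp hRe).1
        nlinarith
      have h4 : (1 - A ^ 2) * (A ^ 2 + 1 - 2 * R) ≤ (2 * ε) * 5 :=
        mul_le_mul h1 h2 hfac (by linarith)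
      linarith
    have hAm16 : (1 - c) ^ 2 / 16 ≤ A ^ 2 * m ^ 2 := by
      have h1 : (1 + c) / 2 * ((1 - c) / 2) ≤ A * m :=
        mul_le_mul hA0 hm0 (by linarith) hApos.le
      have h2 : (1 - c) / 4 ≤ A * m := by nlinarith
      have h3 : ((1 - c) / 4) ^ 2 ≤ (A * m) ^ 2 :=
        pow_le_pow_left₀ (by linarith) h2 2
      nlinarith [h3]
    have key : 10 * ε ≤ 2 * x * (A ^ 2 * m ^ 2) := by
      have h2 : 2 * x * ((1 - c) ^ 2 / 16) ≤ 2 * x * (A ^ 2 * m ^ 2) :=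
        mul_le_mul_of_nonneg_left hAm16 (by linarith)
      have h3 : 2 * x * ((1 - c) ^ 2 / 16) = 10 * ε := by
        rw [hxdef]; field_simp [sub_ne_zero.mpr hc.ne']; norm_num
      linarith
    have hq : N ^ 2 ≤ (1 + x) ^ 2 * (A ^ 2 * m ^ 2) := by
      nlinarith [mul_nonneg (mul_nonneg hx0 hx0) (mul_nonneg (sq_nonneg A) (sq_nonneg m))]
    nlinarith [mul_pos (by linarith : (0:ℝ) < 1 + x) hAM]

/-- Collar estimate : for `|u| ≥ 1 - ε` one has `|1 - ᾱu| ≤ (1 + 80ε/(1-c)²)|u||u-α|`. -/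
lemma collar {α : ℂ} (hc : ‖α‖ < 1) {ε : ℝ} (hε0 : 0 < ε)
    (hε : ε ≤ (1 - ‖α‖) / 2) {u : ℂ} (hu : 1 - ε ≤ ‖u‖) :
    ‖1 - (starRingEnd ℂ) α * u‖
      ≤ (1 + 80 * ε / (1 - ‖α‖) ^ 2) * (‖u‖ * ‖u - α‖) := by
  apply collar_real (‖α‖) ε (‖u‖) (‖u - α‖)
      (((starRingEnd ℂ) α * u).re) _ hc (norm_nonneg α) hε0 hε hu _
      (norm_nonneg _)
  · calc |((starRingEnd ℂ) α * u).re| ≤ ‖(starRingEnd ℂ) α * u‖ :=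
        Complex.abs_re_le_norm _
    _ = ‖α‖ * ‖u‖ := by rw [norm_mul, Complex.norm_conj]
  · have hid := key_identity α u
    rw [← Complex.sq_norm, ← Complex.sq_norm, ← Complex.sq_norm] at hid
    linarith
  · have h1 : Complex.normSq (u - α) = Complex.normSq u - 2 * ((starRingEnd ℂ) α * u).re
        + Complex.normSq α := by
      simp only [Complex.normSq_apply, Complex.sub_re, Complex.sub_im, Complex.mul_re,
        Complex.mul_im, Complex.conj_re, Complex.conj_im]
      ring
    rw [← Complex.sq_norm, ← Complex.sq_norm, ← Complex.sq_norm] at h1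
    linarith
  · have := norm_sub_norm_le u α
    linarith

/-- If `μ` satisfies `μ' = g·μ` with `|g| ≤ K` on `[a,b]`, then `|Log(μ b / μ a)| ≤ K (b-a)`. -/
lemma log_ratio_est {μ g : ℝ → ℂ} {O : Set ℝ} {a b K : ℝ} (hab : a ≤ b)
    (hO : IsOpen O) (hsub : Icc a b ⊆ O) (hgc : ContinuousOn g O)
    (hμ : ∀ s ∈ Icc a b, HasDerivAt μ (g s * μ s) s)
    (hμ0 : ∀ s ∈ Icc a b, μ s ≠ 0)
    (hK : ∀ s ∈ Icc a b, ‖g s‖ ≤ K) :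
    ‖Complex.log (μ b / μ a)‖ ≤ K * (b - a) := by
  set ν : ℝ → ℂ := fun x => ∫ t in a..x, g t with hνdef
  have hint : ∀ s ∈ Icc a b, IntervalIntegrable g volume a s := by
    intro s hs
    apply ContinuousOn.intervalIntegrable
    apply hgc.mono
    rw [uIcc_of_le hs.1]
    exact fun t ht => hsub ⟨ht.1, le_trans ht.2 hs.2⟩
  have hν : ∀ s ∈ Icc a b, HasDerivAt ν (g s) s := by
    intro s hs
    exact intervalIntegral.integral_hasDerivAt_right (hint s hs)
      (ContinuousOn.stronglyMeasurableAtFilter hO hgc s (hsub hs))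
      ((hgc.continuousAt (hO.mem_nhds (hsub hs))))
  set H : ℝ → ℂ := fun s => Complex.exp (-ν s) * μ s with hHdef
  have hH : ∀ s ∈ Icc a b, HasDerivAt H 0 s := by
    intro s hs
    have h1 : HasDerivAt (fun x => Complex.exp (-ν x)) (-g s * Complex.exp (-ν s)) s := by
      have := ((hν s hs).neg).cexp
      simp only [Pi.neg_apply] at this
      convert this using 1
      ring
    have h2 := h1.mul (hμ s hs)
    exact h2.congr_deriv (by ring)
  have hconst : H b = H a := by
    have := constant_of_has_deriv_right_zero
      (fun s hs => (hH s hs).continuousAt.continuousWithinAt)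
      (fun x hx => (hH x (Ico_subset_Icc_self hx)).hasDerivWithinAt) b (right_mem_Icc.mpr hab)
    exact this
  have hνa : ν a = 0 := intervalIntegral.integral_same
  have hexp : Complex.exp (ν b) = μ b / μ a := by
    have ha0 := hμ0 a (left_mem_Icc.mpr hab)
    have h1 : Complex.exp (-ν b) * μ b = Complex.exp (-ν a) * μ a := hconst
    rw [hνa, neg_zero, Complex.exp_zero, one_mul] at h1
    field_simp [Complex.exp_ne_zero, Complex.exp_neg] at h1 ⊢
    rw [← h1, Complex.exp_neg]
    field_simp
  calc ‖Complex.log (μ b / μ a)‖ ≤ ‖ν b‖ :=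
        abs_log_le_of_exp_eq hexp
  _ = ‖∫ t in a..b, g t‖ := by rw [hνdef]
  _ ≤ K * |b - a| := by
      apply intervalIntegral.norm_integral_le_of_norm_le_const
      intro x hx
      rw [uIoc_of_le hab] at hx
      exact hK x ⟨hx.1.le, hx.2⟩
  _ = K * (b - a) := by rw [_root_.abs_of_nonneg (by linarith : (0:ℝ) ≤ b - a)]

/-- The central inequality: reflection through the unit circle contracts the
logarithmic distance. -/
lemma star_ineq {α : ℂ} (hα : α ≠ 0) (hc : ‖α‖ < 1) {u v : ℂ}
    (hu : 1 ≤ ‖u‖) (hv : 1 ≤ ‖v‖)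
    (hzu : 1 - (starRingEnd ℂ) α * u ≠ 0) (hzv : 1 - (starRingEnd ℂ) α * v ≠ 0) :
    ‖Complex.log ((1 - α / v) / (1 - α / u))‖
      ≤ ‖Complex.log
          ((1 - (starRingEnd ℂ) α * v) / (1 - (starRingEnd ℂ) α * u))‖ := by
  have hαc : (starRingEnd ℂ) α ≠ 0 := by
    rw [starRingEnd_apply]; exact star_ne_zero.mpr hα
  set c := ‖α‖ with hcdef
  have hc0 : 0 < c := norm_pos_iff.mpr hα
  have hcsq : (0:ℝ) < (1 - c) ^ 2 := by nlinarith
  set z1 := 1 - (starRingEnd ℂ) α * u with hz1def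
  set z2 := 1 - (starRingEnd ℂ) α * v with hz2def
  set X := Complex.log (z2 / z1) with hXdef
  set B := ‖X‖ with hBdef
  have hB0 : 0 ≤ B := norm_nonneg X
  -- main bound, for every admissible ε
  suffices h : ∀ ε : ℝ, 0 < ε → ε ≤ (1 - c) / 2 →
      ‖Complex.log ((1 - α / v) / (1 - α / u))‖
        ≤ (1 + 80 * ε / (1 - c) ^ 2) * B by
    apply le_of_forall_pos_le_add
    intro η hη
    have hball : 0 < η * (1 - c) ^ 2 / (80 * (B + 1)) := by positivity
    set ε := min ((1 - c) / 2) (η * (1 - c) ^ 2 / (80 * (B + 1))) with hεdef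
    have hε0 : 0 < ε := lt_min (by linarith) hball
    have hεle : ε ≤ (1 - c) / 2 := min_le_left _ _
    have hεle2 : ε ≤ η * (1 - c) ^ 2 / (80 * (B + 1)) := min_le_right _ _
    have h80 : ε * (80 * (B + 1)) ≤ η * (1 - c) ^ 2 :=
      (le_div_iff₀ (by positivity)).mp hεle2
    have hkey : 80 * ε / (1 - c) ^ 2 * B ≤ η := by
      rw [div_mul_eq_mul_div, div_le_iff₀ hcsq]
      nlinarith
    have := h ε hε0 hεle
    calc ‖Complex.log ((1 - α / v) / (1 - α / u))‖
        ≤ (1 + 80 * ε / (1 - c) ^ 2) * B := this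
    _ = B + 80 * ε / (1 - c) ^ 2 * B := by ring
    _ ≤ B + η := by linarith
  intro ε hε0 hεle
  have hεc : c < 1 - ε := by linarith
  have hε1 : 1 - ε ≥ (1 + c) / 2 := by linarith
  set zz : ℝ → ℂ := fun s => z1 * Complex.exp (s * X) with hzzdef
  set uu : ℝ → ℂ := fun s => (1 - zz s) / ((starRingEnd ℂ) α) with huudef
  set μμ : ℝ → ℂ := fun s => 1 - α / uu s with hμμdef
  set κκ : ℝ → ℂ := fun s => (starRingEnd ℂ) (zz s) with hκκdef
  set p : ℝ → ℂ := fun s => if 1 ≤ ‖uu s‖ then μμ s else κκ s with hpdef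
  set K := (1 + 80 * ε / (1 - c) ^ 2) * B with hKdef
  have hxnn : 0 ≤ 80 * ε / (1 - c) ^ 2 := by positivity
  have hKX : B ≤ K := by rw [hKdef]; nlinarith
  have hK0 : 0 ≤ K := le_trans hB0 hKX
  have hzz_ne : ∀ s, zz s ≠ 0 := fun s => mul_ne_zero hzu (Complex.exp_ne_zero _)
  have hzz0 : zz 0 = z1 := by
    rw [hzzdef]; simp
  have hzz1 : zz 1 = z2 := by
    rw [hzzdef]; simp only [Complex.ofReal_one, one_mul, hXdef]
    rw [Complex.exp_log (div_ne_zero hzv hzu)]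
    field_simp
  have hzzuu : ∀ s, zz s = 1 - (starRingEnd ℂ) α * uu s := by
    intro s; rw [huudef]; field_simp; ring
  have huu0 : uu 0 = u := by
    simp only [huudef, hzz0, hz1def]; field_simp; ring
  have huu1 : uu 1 = v := by
    simp only [huudef, hzz1, hz2def]; field_simp; ring
  have hzzcont : Continuous zz := by
    rw [hzzdef]; fun_prop
  have huucont : Continuous uu := by
    rw [huudef]; fun_prop
  -- basic window facts
  have hfacts : ∀ t : ℝ, 1 - ε ≤ ‖uu t‖ →
      uu t ≠ 0 ∧ uu t - α ≠ 0 ∧ μμ t ≠ 0 := by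
    intro t ht
    have h1 : (0:ℝ) < 1 - ε := by linarith
    have huune : uu t ≠ 0 := by
      intro h; rw [h] at ht; simp at ht; linarith
    have h2 : (1 - c) / 2 ≤ ‖uu t - α‖ := by
      have := norm_sub_norm_le (uu t) α
      rw [← hcdef] at this
      linarith
    have huuα : uu t - α ≠ 0 := by
      intro h; rw [h] at h2; simp at h2; linarith
    refine ⟨huune, huuα, ?_⟩
    simp only [hμμdef]
    intro h
    have h3 : α / uu t = 1 := (sub_eq_zero.mp h).symm
    have h4 : ‖α / uu t‖ = 1 := by rw [h3]; simp
    rw [norm_div] at h4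
    have h5 : ‖α‖ = ‖uu t‖ :=
      (div_eq_one_iff_eq (norm_ne_zero_iff.mpr huune)).mp h4
    rw [← hcdef] at h5
    linarith
  -- the logarithmic derivative of μμ
  set g : ℝ → ℂ := fun s => -(α * X * zz s) / ((starRingEnd ℂ) α * uu s * (uu s - α))
    with hgdef
  set O : Set ℝ := {s | uu s ≠ 0 ∧ uu s - α ≠ 0} with hOdef
  have hOopen : IsOpen O := by
    rw [hOdef]
    have h1 : IsOpen {s : ℝ | uu s ≠ 0} :=
      IsOpen.preimage huucont (isOpen_compl_singleton (x := (0:ℂ)))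
    have h2 : IsOpen {s : ℝ | uu s - α ≠ 0} :=
      IsOpen.preimage (huucont.sub continuous_const) (isOpen_compl_singleton (x := (0:ℂ)))
    exact h1.inter h2
  have hgc : ContinuousOn g O := by
    rw [hgdef]
    apply ContinuousOn.div
    · fun_prop
    · fun_prop
    · rintro s ⟨hs1, hs2⟩
      exact mul_ne_zero (mul_ne_zero hαc hs1) hs2
  have hgK : ∀ s : ℝ, 1 - ε ≤ ‖uu s‖ → ‖g s‖ ≤ K := by
    intro s hs
    obtain ⟨h1, h2, _⟩ := hfacts s hs
    have hden : 0 < ‖uu s‖ * ‖uu s - α‖ := by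
      have := norm_pos_iff.mpr h1
      have := norm_pos_iff.mpr h2
      positivity
    have habs : ‖g s‖
        = ‖X‖ * ‖zz s‖ / (‖uu s‖ * ‖uu s - α‖) := by
      rw [hgdef]
      simp only [norm_div, norm_mul, norm_neg, Complex.norm_conj]
      rw [← hcdef, mul_assoc c, mul_assoc c, mul_div_mul_left _ _ (ne_of_gt hc0)]
    rw [habs, div_le_iff₀ hden]
    have hcol := collar hc hε0 hεle (u := uu s) hs
    rw [← hcdef] at hcol
    rw [← hzzuu s] at hcol
    calc ‖X‖ * ‖zz s‖
        ≤ ‖X‖ * ((1 + 80 * ε / (1 - c) ^ 2)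
            * (‖uu s‖ * ‖uu s - α‖)) :=
          mul_le_mul_of_nonneg_left hcol (norm_nonneg X)
    _ = K * (‖uu s‖ * ‖uu s - α‖) := by
          rw [hKdef, hBdef]; ring
  have hμd : ∀ s : ℝ, uu s ≠ 0 → uu s - α ≠ 0 → HasDerivAt μμ (g s * μμ s) s := by
    intro s h1 h2
    have ha : HasDerivAt (fun t : ℝ => (t : ℂ) * X) X s := by
      simpa using (Complex.ofRealCLM.hasDerivAt (x := s)).mul_const X
    have hb := (ha.cexp).const_mul z1
    have hzd : HasDerivAt zz (X * zz s) s := by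
      simp only [hzzdef]
      exact hb.congr_deriv (by ring)
    have hud : HasDerivAt uu (-(X * zz s) / (starRingEnd ℂ) α) s := by
      simp only [huudef]
      exact (hzd.const_sub 1).div_const ((starRingEnd ℂ) α)
    have hdiv : HasDerivAt (fun t => α / uu t)
        ((0 * uu s - α * (-(X * zz s) / (starRingEnd ℂ) α)) / uu s ^ 2) s :=
      (hasDerivAt_const s α).div hud h1
    have hfin := hdiv.const_sub 1
    have hμd2 : HasDerivAt μμ
        (-((0 * uu s - α * (-(X * zz s) / (starRingEnd ℂ) α)) / uu s ^ 2)) s := by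
      simp only [hμμdef]
      exact hfin
    convert hμd2 using 1
    simp only [hgdef, hμμdef]
    field_simp
    ring
  -- seam identity
  have hseam : ∀ s : ℝ, ‖uu s‖ = 1 → μμ s = κκ s := by
    intro s h1
    have huns : uu s ≠ 0 := by
      intro h; rw [h] at h1; simp at h1
    have hcu : (starRingEnd ℂ) (uu s) = (uu s)⁻¹ := by
      have hmc : uu s * (starRingEnd ℂ) (uu s) = 1 := by
        rw [Complex.mul_conj]
        rw [← Complex.sq_norm, h1]
        norm_num
      exact eq_inv_of_mul_eq_one_right hmc
    simp only [hκκdef, hμμdef]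
    rw [hzzuu s]
    rw [map_sub, map_one, map_mul, Complex.conj_conj, hcu]
    rw [div_eq_mul_inv]
  -- κκ estimate
  have hκest : ∀ t1 t2 : ℝ, t1 ≤ t2 →
      ‖Complex.log (κκ t2 / κκ t1)‖ ≤ B * (t2 - t1) := by
    intro t1 t2 h12
    have hexpeq : Complex.exp (((t2 - t1 : ℝ) : ℂ) * (starRingEnd ℂ) X) = κκ t2 / κκ t1 := by
      simp only [hκκdef, hzzdef]
      rw [← map_div₀]
      rw [mul_div_mul_left _ _ hzu]
      rw [← Complex.exp_sub]
      have : ((t2:ℂ) * X - (t1:ℂ) * X) = ((t2 - t1 : ℝ) : ℂ) * X := by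
        push_cast; ring
      rw [this]
      rw [← Complex.exp_conj]
      congr 1
      rw [map_mul, Complex.conj_ofReal]
    calc ‖Complex.log (κκ t2 / κκ t1)‖
        ≤ ‖((t2 - t1 : ℝ) : ℂ) * (starRingEnd ℂ) X‖ :=
          abs_log_le_of_exp_eq hexpeq
    _ = B * (t2 - t1) := by
        rw [norm_mul, Complex.norm_real, Real.norm_eq_abs, Complex.norm_conj, ← hBdef,
          _root_.abs_of_nonneg (by linarith : (0:ℝ) ≤ t2 - t1)]
        ring
  -- p is nonvanishing
  have hκne : ∀ s : ℝ, κκ s ≠ 0 := by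
    intro s
    simp only [hκκdef]
    rw [starRingEnd_apply]
    exact star_ne_zero.mpr (hzz_ne s)
  have hpne : ∀ s : ℝ, p s ≠ 0 := by
    intro s
    simp only [hpdef]
    by_cases hcase : 1 ≤ ‖uu s‖
    · rw [if_pos hcase]
      exact (hfacts s (by linarith)).2.2
    · rw [if_neg hcase]
      exact hκne s
  have hp0 : p 0 = 1 - α / u := by
    simp only [hpdef, huu0]
    rw [if_pos hu, hμμdef]
    simp only [huu0]
  have hp1 : p 1 = 1 - α / v := by
    simp only [hpdef, huu1]
    rw [if_pos hv, hμμdef]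
    simp only [huu1]
  have habscont : Continuous fun s => ‖uu s‖ :=
    continuous_norm.comp huucont
  -- local Lipschitz estimate
  have hloc : ∀ s0 : ℝ, ∃ δ : ℝ, 0 < δ ∧ ∀ s' s'' : ℝ, |s' - s0| < δ → |s'' - s0| < δ →
      s' ≤ s'' → ‖Complex.log (p s'' / p s')‖ ≤ K * (s'' - s') := by
    intro s0
    by_cases hcase : 1 ≤ ‖uu s0‖
    · -- window : |uu| > 1 - ε
      have hopen : IsOpen {s : ℝ | 1 - ε < ‖uu s‖} :=
        isOpen_lt continuous_const habscont
      have hs0mem : s0 ∈ {s : ℝ | 1 - ε < ‖uu s‖} := by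
        simp only [mem_setOf_eq]; linarith
      obtain ⟨δ, hδ0, hball⟩ := Metric.isOpen_iff.mp hopen s0 hs0mem
      refine ⟨δ, hδ0, ?_⟩
      intro s' s'' h' h'' hle
      have hsubint : ∀ t ∈ Icc s' s'', 1 - ε < ‖uu t‖ := by
        intro t ht
        have habs' := abs_lt.mp h'
        have habs'' := abs_lt.mp h''
        have : t ∈ Metric.ball s0 δ := by
          rw [Metric.mem_ball, Real.dist_eq, abs_lt]
          constructor <;> [linarith [ht.1]; linarith [ht.2]]
        exact hball this
      -- μμ estimate on subintervals
      have hμest : ∀ t1 t2 : ℝ, t1 ∈ Icc s' s'' → t2 ∈ Icc s' s'' → t1 ≤ t2 →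
          ‖Complex.log (μμ t2 / μμ t1)‖ ≤ K * (t2 - t1) := by
        intro t1 t2 ht1 ht2 h12
        have hsub2 : Icc t1 t2 ⊆ Icc s' s'' := Icc_subset_Icc ht1.1 ht2.2
        apply log_ratio_est h12 hOopen ?_ hgc ?_ ?_ ?_
        · intro t ht
          have := hsubint t (hsub2 ht)
          obtain ⟨e1, e2, _⟩ := hfacts t this.le
          exact ⟨e1, e2⟩
        · intro t ht
          have := hsubint t (hsub2 ht)
          obtain ⟨e1, e2, _⟩ := hfacts t this.le
          exact hμd t e1 e2
        · intro t ht
          exact (hfacts t (hsubint t (hsub2 ht)).le).2.2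
        · intro t ht
          exact hgK t (hsubint t (hsub2 ht)).le
      have hmeml : s' ∈ Icc s' s'' := left_mem_Icc.mpr hle
      have hmemr : s'' ∈ Icc s' s'' := right_mem_Icc.mpr hle
      by_cases hE' : 1 ≤ ‖uu s'‖
      · by_cases hE'' : 1 ≤ ‖uu s''‖
        · -- both outside : pure μμ
          have e1 : p s' = μμ s' := by simp only [hpdef]; rw [if_pos hE']
          have e2 : p s'' = μμ s'' := by simp only [hpdef]; rw [if_pos hE'']
          rw [e1, e2]
          exact hμest s' s'' hmeml hmemr hle
        · -- crossing downwards : seam point σ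
          obtain ⟨σ, hσmem, hσ⟩ := intermediate_value_Icc' hle habscont.continuousOn
            ⟨(not_le.mp hE'').le, hE'⟩
          have hσ' : ‖uu σ‖ = 1 := hσ
          have hseamσ : μμ σ = κκ σ := hseam σ hσ'
          have hμσne : μμ σ ≠ 0 := (hfacts σ (by rw [hσ']; linarith)).2.2
          have e1 : p s' = μμ s' := by simp only [hpdef]; rw [if_pos hE']
          have e2 : p s'' = κκ s'' := by simp only [hpdef]; rw [if_neg hE'']
          have b1 : ‖Complex.log (p s'' / μμ σ)‖ ≤ B * (s'' - σ) := by
            rw [e2, hseamσ]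
            exact hκest σ s'' hσmem.2
          have b2 : ‖Complex.log (μμ σ / p s')‖ ≤ K * (σ - s') := by
            rw [e1]
            exact hμest s' σ hmeml hσmem hσmem.1
          have htri := abs_log_div_le (hpne s') hμσne (hpne s'')
          have hb1 : B * (s'' - σ) ≤ K * (s'' - σ) :=
            mul_le_mul_of_nonneg_right hKX (by linarith [hσmem.2])
          calc ‖Complex.log (p s'' / p s')‖
              ≤ ‖Complex.log (p s'' / μμ σ)‖
                + ‖Complex.log (μμ σ / p s')‖ := htri
          _ ≤ K * (s'' - σ) + K * (σ - s') := by
                have := hσmem.1; have := hσmem.2; linarith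
          _ = K * (s'' - s') := by ring
      · by_cases hE'' : 1 ≤ ‖uu s''‖
        · -- crossing upwards
          obtain ⟨σ, hσmem, hσ⟩ := intermediate_value_Icc hle habscont.continuousOn
            ⟨(not_le.mp hE').le, hE''⟩
          have hσ' : ‖uu σ‖ = 1 := hσ
          have hseamσ : μμ σ = κκ σ := hseam σ hσ'
          have hμσne : μμ σ ≠ 0 := (hfacts σ (by rw [hσ']; linarith)).2.2
          have e1 : p s' = κκ s' := by simp only [hpdef]; rw [if_neg hE']
          have e2 : p s'' = μμ s'' := by simp only [hpdef]; rw [if_pos hE'']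
          have b1 : ‖Complex.log (p s'' / μμ σ)‖ ≤ K * (s'' - σ) := by
            rw [e2]
            exact hμest σ s'' hσmem hmemr hσmem.2
          have b2 : ‖Complex.log (μμ σ / p s')‖ ≤ B * (σ - s') := by
            rw [e1, hseamσ]
            exact hκest s' σ hσmem.1
          have htri := abs_log_div_le (hpne s') hμσne (hpne s'')
          have hb2 : B * (σ - s') ≤ K * (σ - s') :=
            mul_le_mul_of_nonneg_right hKX (by linarith [hσmem.1])
          calc ‖Complex.log (p s'' / p s')‖
              ≤ ‖Complex.log (p s'' / μμ σ)‖
                + ‖Complex.log (μμ σ / p s')‖ := htri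
          _ ≤ K * (s'' - σ) + K * (σ - s') := by linarith
          _ = K * (s'' - s') := by ring
        · -- both inside : pure κκ
          have e1 : p s' = κκ s' := by simp only [hpdef]; rw [if_neg hE']
          have e2 : p s'' = κκ s'' := by simp only [hpdef]; rw [if_neg hE'']
          rw [e1, e2]
          calc ‖Complex.log (κκ s'' / κκ s')‖ ≤ B * (s'' - s') :=
                hκest s' s'' hle
          _ ≤ K * (s'' - s') := mul_le_mul_of_nonneg_right hKX (by linarith)
    · -- interior of the disk : pure κκ window
      have hopen : IsOpen {s : ℝ | ‖uu s‖ < 1} :=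
        isOpen_lt habscont continuous_const
      have hs0mem : s0 ∈ {s : ℝ | ‖uu s‖ < 1} := not_le.mp hcase
      obtain ⟨δ, hδ0, hball⟩ := Metric.isOpen_iff.mp hopen s0 hs0mem
      refine ⟨δ, hδ0, ?_⟩
      intro s' s'' h' h'' hle
      have hin : ∀ t : ℝ, |t - s0| < δ → ‖uu t‖ < 1 := by
        intro t ht
        exact hball (by rwa [Metric.mem_ball, Real.dist_eq])
      have e1 : p s' = κκ s' := by simp only [hpdef]; rw [if_neg (not_le.mpr (hin s' h'))]
      have e2 : p s'' = κκ s'' := by simp only [hpdef]; rw [if_neg (not_le.mpr (hin s'' h''))]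
      rw [e1, e2]
      calc ‖Complex.log (κκ s'' / κκ s')‖ ≤ B * (s'' - s') := hκest s' s'' hle
      _ ≤ K * (s'' - s') := mul_le_mul_of_nonneg_right hKX (by linarith)
  -- globalization via the Lebesgue number lemma
  choose δf hδf0 hδf using hloc
  have hcov : Icc (0:ℝ) 1 ⊆ ⋃ s0 : ℝ, Metric.ball s0 (δf s0) := by
    intro x _
    exact mem_iUnion.mpr ⟨x, Metric.mem_ball_self (hδf0 x)⟩
  obtain ⟨δs, hδs0, hleb⟩ := lebesgue_number_lemma_of_metric isCompact_Icc
    (fun s0 => Metric.isOpen_ball) hcov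
  obtain ⟨N, hN⟩ := exists_nat_one_div_lt hδs0
  have hNpos : (0:ℝ) < (N:ℝ) + 1 := by positivity
  set T : ℕ → ℝ := fun j => (j : ℝ) / ((N : ℝ) + 1) with hTdef
  have hT0 : T 0 = 0 := by simp [hTdef]
  have hTN : T (N + 1) = 1 := by
    simp only [hTdef]; push_cast; field_simp
  have hTsucc : ∀ j : ℕ, T (j + 1) = T j + 1 / ((N:ℝ) + 1) := by
    intro j; simp only [hTdef]; push_cast; ring
  have hTmem : ∀ j : ℕ, j ≤ N + 1 → T j ∈ Icc (0:ℝ) 1 := by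
    intro j hj
    constructor
    · simp only [hTdef]; positivity
    · simp only [hTdef]
      rw [div_le_one hNpos]
      push_cast
      exact_mod_cast Nat.cast_le.mpr hj
  have hstep : ∀ j : ℕ, j ≤ N →
      ‖Complex.log (p (T (j+1)) / p (T j))‖ ≤ K * (1 / ((N:ℝ) + 1)) := by
    intro j hj
    obtain ⟨i, hi⟩ := hleb (T j) (hTmem j (by omega))
    have h1 : T j ∈ Metric.ball i (δf i) := hi (Metric.mem_ball_self hδs0)
    have h2 : T (j+1) ∈ Metric.ball i (δf i) := by
      apply hi
      rw [Metric.mem_ball, Real.dist_eq, hTsucc j]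
      rw [show T j + 1 / ((N:ℝ) + 1) - T j = 1 / ((N:ℝ) + 1) by ring]
      rw [_root_.abs_of_nonneg (by positivity : (0:ℝ) ≤ 1 / ((N:ℝ)+1))]
      exact hN
    have h3 : T j ≤ T (j+1) := by
      rw [hTsucc j]
      have : (0:ℝ) < 1 / ((N:ℝ)+1) := by positivity
      linarith
    rw [Metric.mem_ball, Real.dist_eq] at h1 h2
    have h4 := hδf i (T j) (T (j+1)) h1 h2 h3
    calc ‖Complex.log (p (T (j+1)) / p (T j))‖ ≤ K * (T (j+1) - T j) := h4
    _ = K * (1 / ((N:ℝ) + 1)) := by rw [hTsucc j]; ring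
  have hind : ∀ j : ℕ, j ≤ N + 1 →
      ‖Complex.log (p (T j) / p 0)‖ ≤ K * T j := by
    intro j
    induction j with
    | zero =>
      intro _
      rw [hT0, div_self (hpne 0), Complex.log_one]
      simp
    | succ j ih =>
      intro hj
      have h1 := abs_log_div_le (hpne 0) (hpne (T j)) (hpne (T (j+1)))
      have h2 := hstep j (by omega)
      have h3 := ih (by omega)
      have h4 : K * T j + K * (1 / ((N:ℝ) + 1)) = K * T (j+1) := by
        rw [hTsucc j]; ring
      linarith
  have hfinal := hind (N + 1) (le_refl _)
  rw [hTN, hp0, hp1, mul_one] at hfinal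
  exact hfinal

theorem postcritical_map_injective (n d : ℕ) (hd : 0 < d) (hdn : d < 2 * n)
    (r : ℝ) (hr : 0 < r) (α : ℂ) (hα0 : 0 < ‖α‖) (hα1 : ‖α‖ < 1) :
    Set.InjOn
      (fun u : ℂ => (r : ℂ) * (u - 1 / (starRingEnd ℂ α)) * (1 - α / u) ^ ((d : ℂ) / (n : ℂ) - 1))
      {u : ℂ | 1 ≤ ‖u‖} := by
  intro u1 hu1 u2 hu2 heq
  simp only [Set.mem_setOf_eq] at hu1 hu2
  have hα : α ≠ 0 := by
    intro h; rw [h] at hα0; simp at hα0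
  have hαc : (starRingEnd ℂ) α ≠ 0 := by
    rw [starRingEnd_apply]; exact star_ne_zero.mpr hα
  have hn : 0 < n := by omega
  have hnR : (0:ℝ) < (n:ℝ) := by exact_mod_cast hn
  set τ : ℝ := (d : ℝ) / (n : ℝ) - 1 with hτdef
  have hτcast : ((d : ℂ) / (n : ℂ) - 1) = (τ : ℂ) := by
    rw [hτdef]; push_cast; ring
  have hτlt : |τ| < 1 := by
    rw [hτdef, abs_lt]
    constructor
    · have : (0:ℝ) < (d:ℝ) / (n:ℝ) := div_pos (by exact_mod_cast hd) hnR
      linarith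
    · have h2 : (d:ℝ) < 2 * (n:ℝ) := by exact_mod_cast hdn
      have : (d:ℝ) / (n:ℝ) < 2 := by rw [div_lt_iff₀ hnR]; linarith
      linarith
  -- facts about the base 1 - α/w
  have hne : ∀ w : ℂ, 1 ≤ ‖w‖ →
      w ≠ 0 ∧ (1 - α / w) ≠ 0 ∧ 0 < (1 - α / w).re := by
    intro w hw
    have hw0 : w ≠ 0 := by
      intro h; rw [h] at hw; simp at hw; linarith
    have habs : ‖α / w‖ < 1 := by
      rw [norm_div, div_lt_one (norm_pos_iff.mpr hw0)]
      exact lt_of_lt_of_le hα1 hw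
    have hre : (α / w).re < 1 :=
      lt_of_le_of_lt (le_trans (le_abs_self _) (Complex.abs_re_le_norm _)) habs
    refine ⟨hw0, ?_, ?_⟩
    · intro h
      have h2 : α / w = 1 := by
        have := sub_eq_zero.mp h; exact this.symm
      rw [h2] at habs; simp at habs
    · simp only [Complex.sub_re, Complex.one_re]
      linarith
  have hcpow : ∀ w : ℂ, 1 ≤ ‖w‖ →
      (1 - α / w) ^ ((d : ℂ) / (n : ℂ) - 1)
        = Complex.exp ((τ : ℂ) * Complex.log (1 - α / w)) := by
    intro w hw
    rw [Complex.cpow_def_of_ne_zero (hne w hw).2.1, hτcast, mul_comm]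
  have hr0 : (r : ℂ) ≠ 0 := Complex.ofReal_ne_zero.mpr hr.ne'
  simp only [hcpow u1 hu1, hcpow u2 hu2] at heq
  set L1 := Complex.log (1 - α / u1) with hL1def
  set L2 := Complex.log (1 - α / u2) with hL2def
  have heq2 : (u1 - 1 / (starRingEnd ℂ) α) * Complex.exp ((τ:ℂ) * L1)
      = (u2 - 1 / (starRingEnd ℂ) α) * Complex.exp ((τ:ℂ) * L2) := by
    apply mul_left_cancel₀ hr0
    calc (r:ℂ) * ((u1 - 1 / (starRingEnd ℂ) α) * Complex.exp ((τ:ℂ) * L1))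
        = (r : ℂ) * (u1 - 1 / (starRingEnd ℂ α)) * Complex.exp ((τ:ℂ) * L1) := by ring
    _ = (r : ℂ) * (u2 - 1 / (starRingEnd ℂ α)) * Complex.exp ((τ:ℂ) * L2) := heq
    _ = (r:ℂ) * ((u2 - 1 / (starRingEnd ℂ) α) * Complex.exp ((τ:ℂ) * L2)) := by ring
  by_cases hb1 : u1 - 1 / (starRingEnd ℂ) α = 0
  · have h0 : (u2 - 1 / (starRingEnd ℂ) α) * Complex.exp ((τ:ℂ) * L2) = 0 := by
      rw [← heq2, hb1, zero_mul]
    have hb2 : u2 - 1 / (starRingEnd ℂ) α = 0 :=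
      (mul_eq_zero.mp h0).resolve_right (Complex.exp_ne_zero _)
    have e1 := sub_eq_zero.mp hb1
    have e2 := sub_eq_zero.mp hb2
    rw [e1, e2]
  · have hb2 : u2 - 1 / (starRingEnd ℂ) α ≠ 0 := by
      intro h
      apply hb1
      have h0 : (u1 - 1 / (starRingEnd ℂ) α) * Complex.exp ((τ:ℂ) * L1) = 0 := by
        rw [heq2, h, zero_mul]
      exact (mul_eq_zero.mp h0).resolve_right (Complex.exp_ne_zero _)
    -- pass to z-variables
    have hz1 : 1 - (starRingEnd ℂ) α * u1 ≠ 0 := by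
      intro h
      apply hb1
      have h1 : (starRingEnd ℂ) α * u1 = 1 := by linear_combination -h
      rw [sub_eq_zero, eq_div_iff hαc, mul_comm]
      exact h1
    have hz2 : 1 - (starRingEnd ℂ) α * u2 ≠ 0 := by
      intro h
      apply hb2
      have h1 : (starRingEnd ℂ) α * u2 = 1 := by linear_combination -h
      rw [sub_eq_zero, eq_div_iff hαc, mul_comm]
      exact h1
    have hq : (1 - (starRingEnd ℂ) α * u2) / (1 - (starRingEnd ℂ) α * u1)
        = Complex.exp ((τ:ℂ) * (L1 - L2)) := by
      have h3 : (1 - (starRingEnd ℂ) α * u2) / (1 - (starRingEnd ℂ) α * u1)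
          = (u2 - 1 / (starRingEnd ℂ) α) / (u1 - 1 / (starRingEnd ℂ) α) := by
        rw [div_eq_div_iff hz1 hb1]
        field_simp
        ring
      rw [h3]
      rw [div_eq_iff hb1]
      have hsplit : Complex.exp ((τ:ℂ) * (L1 - L2))
          = Complex.exp ((τ:ℂ) * L1) / Complex.exp ((τ:ℂ) * L2) := by
        rw [← Complex.exp_sub]
        congr 1
        ring
      rw [hsplit]
      rw [div_mul_eq_mul_div, eq_div_iff (Complex.exp_ne_zero _)]
      linear_combination -heq2
    -- argument bounds
    have hL1im : |L1.im| < Real.pi / 2 := by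
      rw [hL1def, Complex.log_im]
      exact Complex.abs_arg_lt_pi_div_two_iff.mpr (Or.inl (hne u1 hu1).2.2)
    have hL2im : |L2.im| < Real.pi / 2 := by
      rw [hL2def, Complex.log_im]
      exact Complex.abs_arg_lt_pi_div_two_iff.mpr (Or.inl (hne u2 hu2).2.2)
    have hπ : 0 < Real.pi := Real.pi_pos
    have hΔim : |(L1 - L2).im| < Real.pi := by
      simp only [Complex.sub_im]
      cases abs_cases (L1.im - L2.im) <;> cases abs_cases L1.im <;> cases abs_cases L2.im <;>
        linarith
    have hτΔim : |(((τ:ℂ)) * (L1 - L2)).im| < Real.pi := by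
      have him : (((τ:ℂ)) * (L1 - L2)).im = τ * (L1 - L2).im := by
        simp [Complex.mul_im, Complex.ofReal_re, Complex.ofReal_im]
      rw [him, abs_mul]
      rcases eq_or_ne ((L1 - L2).im) 0 with h0 | h0
      · rw [h0]; simp; exact hπ
      · calc |τ| * |(L1 - L2).im| ≤ 1 * |(L1 - L2).im| :=
              mul_le_mul_of_nonneg_right hτlt.le (abs_nonneg _)
        _ = |(L1 - L2).im| := one_mul _
        _ < Real.pi := hΔim
    -- take logs
    have hlogq : Complex.log ((1 - (starRingEnd ℂ) α * u2) / (1 - (starRingEnd ℂ) α * u1))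
        = (τ:ℂ) * (L1 - L2) := by
      rw [hq]
      exact Complex.log_exp (by linarith [abs_lt.mp hτΔim]) (by linarith [abs_lt.mp hτΔim])
    have hΔlog : L1 - L2
        = Complex.log ((1 - α / u1) / (1 - α / u2)) := by
      have hexpΔ : Complex.exp (L1 - L2) = (1 - α / u1) / (1 - α / u2) := by
        rw [Complex.exp_sub, hL1def, hL2def, Complex.exp_log (hne u1 hu1).2.1,
          Complex.exp_log (hne u2 hu2).2.1]
      have := Complex.log_exp (by linarith [abs_lt.mp hΔim]) (by linarith [abs_lt.mp hΔim])
        (x := L1 - L2)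
      rw [hexpΔ] at this
      exact this.symm
    -- apply the central inequality with u := u2, v := u1
    have hstar := star_ineq hα hα1 hu2 hu1 hz2 hz1
    -- the reversed ratio is exp of the negative
    have hqinv : Complex.exp (-(((τ:ℂ)) * (L1 - L2)))
        = (1 - (starRingEnd ℂ) α * u1) / (1 - (starRingEnd ℂ) α * u2) := by
      rw [Complex.exp_neg, ← hq, inv_div]
    have h5 := abs_log_le_of_exp_eq hqinv
    have habsneg : ‖-(((τ:ℂ)) * (L1 - L2))‖ = |τ| * ‖L1 - L2‖ := by
      rw [norm_neg, norm_mul, Complex.norm_real, Real.norm_eq_abs]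
    have hchain : ‖L1 - L2‖ ≤ |τ| * ‖L1 - L2‖ := by
      calc ‖L1 - L2‖
          = ‖Complex.log ((1 - α / u1) / (1 - α / u2))‖ := by rw [← hΔlog]
      _ ≤ ‖Complex.log
            ((1 - (starRingEnd ℂ) α * u1) / (1 - (starRingEnd ℂ) α * u2))‖ := hstar
      _ ≤ |τ| * ‖L1 - L2‖ := by rw [← habsneg]; exact h5
    have hzero : L1 - L2 = 0 := by
      by_contra h0
      have hpos : 0 < ‖L1 - L2‖ := norm_pos_iff.mpr (sub_ne_zero.mpr ?_)
      · nlinarith [hchain, hτlt, norm_nonneg (L1 - L2)]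
      · exact fun h => h0 (sub_eq_zero.mpr h)
    have heqbase : 1 - α / u1 = 1 - α / u2 := by
      have e1 : Complex.exp L1 = 1 - α / u1 := Complex.exp_log (hne u1 hu1).2.1
      have e2 : Complex.exp L2 = 1 - α / u2 := Complex.exp_log (hne u2 hu2).2.1
      have : L1 = L2 := by linear_combination hzero
      rw [← e1, ← e2, this]
    have hu1ne : u1 ≠ 0 := (hne u1 hu1).1
    have hu2ne : u2 ≠ 0 := (hne u2 hu2).1
    have hdiv : α / u1 = α / u2 := by
      have := heqbase
      linear_combination -this
    field_simp at hdiv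
    exact hdiv.symm
end

section
/- Let n and d be positive integers with 0 < d < 2n, let a be real with 0 < a < 1, and let θ ∈ ℝ. Then the complex number (1 − a·e^{iθ})·(1 − a·e^{−iθ})^{d/n − 1}, where the complex power is the principal branch (well defined since Re(1 − a·e^{−iθ}) > 0), is real if and only if sin θ = 0. -/
open Complex

theorem real_on_circle_iff (n d : ℕ) (hd : 0 < d) (hdn : d < 2 * n)
    (a : ℝ) (ha0 : 0 < a) (ha1 : a < 1) (θ : ℝ) :
    ((1 - (a : ℂ) * Complex.exp (Complex.I * θ)) *
        (1 - (a : ℂ) * Complex.exp (-(Complex.I * θ))) ^ ((d : ℂ) / (n : ℂ) - 1)).im = 0 ↔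
      Real.sin θ = 0 := by
  have hn : 0 < n := by omega
  set w : ℂ := 1 - (a : ℂ) * Complex.exp (Complex.I * θ) with hw
  have hwre : 0 < w.re := by
    have h1 : w.re = 1 - a * Real.cos θ := by
      simp [hw, mul_comm Complex.I (θ:ℂ), Complex.exp_ofReal_mul_I_re]
    rw [h1]
    nlinarith [Real.neg_one_le_cos θ, Real.cos_le_one θ]
  have hwim : w.im = -(a * Real.sin θ) := by
    simp [hw, mul_comm Complex.I (θ:ℂ), Complex.exp_ofReal_mul_I_im]
  have hw0 : w ≠ 0 := by
    intro h; rw [h] at hwre; simp at hwre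
  have hconj : 1 - (a : ℂ) * Complex.exp (-(Complex.I * θ)) = (starRingEnd ℂ) w := by
    rw [hw]
    simp [← Complex.exp_conj, map_mul, Complex.conj_I]
  set s : ℝ := (d : ℝ) / n - 1 with hs
  have hexp : (d : ℂ) / (n : ℂ) - 1 = (s : ℂ) := by push_cast [hs]; ring
  set r : ℝ := ‖w‖ with hr
  set φ : ℝ := Complex.arg w with hφ
  have hr0 : 0 < r := by simpa [hr] using norm_pos_iff.mpr hw0
  have hargne : Complex.arg w ≠ Real.pi := by
    intro h
    have := Complex.arg_eq_pi_iff.mp h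
    linarith [this.1]
  have hargconj : Complex.arg ((starRingEnd ℂ) w) = -φ := by
    rw [Complex.arg_conj, if_neg hargne]
  have hconj0 : (starRingEnd ℂ) w ≠ 0 := by simpa using hw0
  have key : w * ((starRingEnd ℂ) w) ^ ((s : ℝ) : ℂ) =
      ((r * Real.exp (s * Real.log r) : ℝ) : ℂ) *
        Complex.exp ((((1 - s) * φ : ℝ) : ℂ) * Complex.I) := by
    rw [Complex.cpow_def_of_ne_zero hconj0, Complex.log, Complex.norm_conj, hargconj]
    conv_lhs => rw [← Complex.norm_mul_exp_arg_mul_I w]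
    rw [norm_mul, Complex.norm_real, Real.norm_eq_abs, Complex.norm_exp_ofReal_mul_I, mul_one,
      abs_of_pos hr0]
    push_cast [Complex.ofReal_exp]
    rw [← hr, ← hφ, mul_assoc, mul_assoc, ← Complex.exp_add, ← Complex.exp_add]
    congr 1
    push_cast
    ring
  rw [hconj, hexp, key]
  have him : (((r * Real.exp (s * Real.log r) : ℝ) : ℂ) *
      Complex.exp ((((1 - s) * φ : ℝ) : ℂ) * Complex.I)).im
      = (r * Real.exp (s * Real.log r)) * Real.sin ((1 - s) * φ) := by
    rw [Complex.im_ofReal_mul, Complex.exp_ofReal_mul_I_im]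
  rw [him]
  have hpos : 0 < r * Real.exp (s * Real.log r) := by positivity
  rw [mul_eq_zero]
  have h1s : 0 < 1 - s := by
    have : (d : ℝ) / n < 2 := by
      rw [div_lt_iff₀ (by positivity)]
      push_cast; exact_mod_cast (by exact_mod_cast hdn : (d:ℝ) < 2 * n)
    simp [hs]; linarith
  have h1s2 : 1 - s < 2 := by
    have : 0 < (d : ℝ) / n := by positivity
    simp [hs]; linarith
  have hφlt : |φ| < Real.pi / 2 := by
    rw [hφ, Complex.abs_arg_lt_pi_div_two_iff]
    exact Or.inl hwre
  have habs : |(1 - s) * φ| < Real.pi := by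
    rw [abs_mul, abs_of_pos h1s]
    calc (1 - s) * |φ| < 2 * (Real.pi / 2) := by
          rcases eq_or_ne φ 0 with h | h
          · simp [h]; positivity
          · have : 0 < |φ| := abs_pos.mpr h
            apply mul_lt_mul' (le_of_lt h1s2) hφlt (abs_nonneg _) (by norm_num)
          
      _ = Real.pi := by ring
  rw [abs_lt] at habs
  rw [Real.sin_eq_zero_iff_of_lt_of_lt habs.1 habs.2]
  constructor
  · rintro (h | h)
    · exact absurd h (ne_of_gt hpos)
    · have : φ = 0 := by
        rcases mul_eq_zero.mp h with h' | h'
        · linarith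
        · exact h'
      rw [hφ] at this
      have h2 := (Complex.arg_eq_zero_iff.mp this).2
      rw [hwim] at h2
      have := mul_eq_zero.mp (neg_eq_zero.mp h2)
      rcases this with h' | h'
      · exact absurd h' (ne_of_gt ha0)
      · exact h'
  · intro h
    right
    have : w.im = 0 := by rw [hwim, h]; ring
    have : φ = 0 := by
      rw [hφ, Complex.arg_eq_zero_iff]
      exact ⟨le_of_lt hwre, this⟩
    rw [this]; ring
end

section
/- Let n and d be positive integers with 0 < d < n, let T > 0, and let t ∈ ℂ satisfy 0 < |t| < t_cr, where t_cr = (n/d)·(T/(2n−d))^{(2n−d)/(2n)}. Then the equation r^{4n/d − 2} − (T/n)·r^{2n/d − 2} + ((n−d)/n)·(d²/n²)·|t|² = 0 (with real powers of r) has exactly two solutions r in (0, ∞); denoting them r_− < r_+, they satisfy 0 < r_− < r_min < r_+ < (T/n)^{d/(2n)}, where r_min = ((T/n)·(n−d)/(2n−d))^{d/(2n)}. -/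
open Real Set Filter

lemma F_hasDeriv (T' c p : ℝ) (x : ℝ) (hx : 0 < x) :
    HasDerivAt (fun y : ℝ => y ^ (2 - p) - T' * y ^ (1 - p) + c)
      (x ^ (-p) * ((2 - p) * x - T' * (1 - p))) x := by
  have h1 : HasDerivAt (fun y : ℝ => y ^ (2 - p)) ((2 - p) * x ^ (2 - p - 1)) x :=
    Real.hasDerivAt_rpow_const (Or.inl hx.ne')
  have h2 : HasDerivAt (fun y : ℝ => y ^ (1 - p)) ((1 - p) * x ^ (1 - p - 1)) x :=
    Real.hasDerivAt_rpow_const (Or.inl hx.ne')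
  have h := (h1.sub (h2.const_mul T')).add_const c
  refine h.congr_deriv ?_
  have e1 : x ^ (2 - p - 1) = x * x ^ (-p) := by
    rw [show (2 - p - 1 : ℝ) = 1 + -p by ring, Real.rpow_add hx, Real.rpow_one]
  have e2 : x ^ (1 - p - 1) = x ^ (-p) := by norm_num
  rw [e1, e2]; ring

lemma F_contOn (T' c p : ℝ) (s : Set ℝ) (hs : ∀ x ∈ s, 0 < x) :
    ContinuousOn (fun y : ℝ => y ^ (2 - p) - T' * y ^ (1 - p) + c) s :=
  fun x hx => ((F_hasDeriv T' c p x (hs x hx)).continuousAt).continuousWithinAt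

lemma F_aux (T' c p : ℝ) (hp0 : 0 < p) (hp1 : p < 1) (hT' : 0 < T') (hc : 0 < c)
    (hFm : (T' * ((1 - p) / (2 - p))) ^ (2 - p)
        - T' * (T' * ((1 - p) / (2 - p))) ^ (1 - p) + c < 0) :
    ∃ xm xp : ℝ, 0 < xm ∧ xm < T' * ((1 - p) / (2 - p)) ∧
      T' * ((1 - p) / (2 - p)) < xp ∧ xp < T' ∧
      xm ^ (2 - p) - T' * xm ^ (1 - p) + c = 0 ∧
      xp ^ (2 - p) - T' * xp ^ (1 - p) + c = 0 ∧
      ∀ x : ℝ, 0 < x → x ^ (2 - p) - T' * x ^ (1 - p) + c = 0 → x = xm ∨ x = xp := by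
  set F : ℝ → ℝ := fun y => y ^ (2 - p) - T' * y ^ (1 - p) + c with hF
  set m : ℝ := T' * ((1 - p) / (2 - p)) with hm
  have h2p : 0 < 2 - p := by linarith
  have h1p : 0 < 1 - p := by linarith
  have hm0 : 0 < m := by positivity
  have hmT : m < T' := by
    rw [hm]
    nth_rewrite 2 [show T' = T' * 1 by ring]
    exact mul_lt_mul_of_pos_left (by rw [div_lt_one h2p]; linarith) hT'
  -- strict anti on Ioc 0 m
  have hanti : StrictAntiOn F (Ioc 0 m) := by
    apply strictAntiOn_of_deriv_neg (convex_Ioc 0 m)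
      (F_contOn T' c p _ (fun x hx => hx.1))
    intro x hx
    rw [interior_Ioc] at hx
    rw [(F_hasDeriv T' c p x hx.1).deriv]
    apply mul_neg_of_pos_of_neg (Real.rpow_pos_of_pos hx.1 _)
    have : (2 - p) * x < (2 - p) * m := mul_lt_mul_of_pos_left hx.2 h2p
    have hme : (2 - p) * m = T' * (1 - p) := by
      rw [hm]; field_simp
    linarith
  -- strict mono on Ici m
  have hmono : StrictMonoOn F (Ici m) := by
    apply strictMonoOn_of_deriv_pos (convex_Ici m)
      (F_contOn T' c p _ (fun x hx => lt_of_lt_of_le hm0 hx))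
    intro x hx
    rw [interior_Ici] at hx
    rw [(F_hasDeriv T' c p x (hm0.trans hx)).deriv]
    apply mul_pos (Real.rpow_pos_of_pos (hm0.trans hx) _)
    have : (2 - p) * m < (2 - p) * x := mul_lt_mul_of_pos_left hx h2p
    have hme : (2 - p) * m = T' * (1 - p) := by rw [hm]; field_simp
    linarith
  have hFT : F T' = c := by
    have : (T' : ℝ) ^ (2 - p) = T' * T' ^ (1 - p) := by
      rw [show (2 - p : ℝ) = 1 + (1 - p) by ring, Real.rpow_add hT', Real.rpow_one]
    simp only [hF, this]; ring
  -- find x0 ∈ (0, m) with F x0 > 0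
  have htend : Tendsto F (nhdsWithin 0 (Ioi 0)) (nhds c) := by
    have h1 : Tendsto (fun y : ℝ => y ^ (2 - p)) (nhdsWithin 0 (Ioi 0)) (nhds 0) := by
      have := (Real.continuousAt_rpow_const 0 (2 - p) (Or.inr h2p.le)).tendsto
      rw [Real.zero_rpow h2p.ne'] at this
      exact this.mono_left nhdsWithin_le_nhds
    have h2 : Tendsto (fun y : ℝ => y ^ (1 - p)) (nhdsWithin 0 (Ioi 0)) (nhds 0) := by
      have := (Real.continuousAt_rpow_const 0 (1 - p) (Or.inr h1p.le)).tendsto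
      rw [Real.zero_rpow h1p.ne'] at this
      exact this.mono_left nhdsWithin_le_nhds
    have : Tendsto F (nhdsWithin 0 (Ioi 0)) (nhds (0 - T' * 0 + c)) :=
      (h1.sub (h2.const_mul T')).add_const c
    simpa using this
  have hx0 : ∃ x0 : ℝ, (0 < F x0) ∧ x0 ∈ Ioo 0 m := by
    have hev : ∀ᶠ x in nhdsWithin 0 (Ioi 0), 0 < F x :=
      htend.eventually (eventually_gt_nhds hc)
    have hev2 : ∀ᶠ x in nhdsWithin 0 (Ioi 0), x ∈ Ioo 0 m :=
      Ioo_mem_nhdsGT_of_mem ⟨le_refl 0, hm0⟩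
    exact (hev.and hev2).exists
  obtain ⟨x0, hFx0, hx00, hx0m⟩ := hx0
  -- root xm in (x0, m)
  have hFm' : F m < 0 := hFm
  have hIVT1 : ∃ xm ∈ Ioo x0 m, F xm = 0 := by
    have := intermediate_value_Ioo' (le_of_lt hx0m)
      (F_contOn T' c p (Icc x0 m) (fun x hx => lt_of_lt_of_le hx00 hx.1))
    have h0 : (0 : ℝ) ∈ Ioo (F m) (F x0) := ⟨hFm', hFx0⟩
    obtain ⟨xm, hxm, hxm0⟩ := this h0
    exact ⟨xm, hxm, hxm0⟩
  have hIVT2 : ∃ xp ∈ Ioo m T', F xp = 0 := by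
    have := intermediate_value_Ioo (le_of_lt hmT)
      (F_contOn T' c p (Icc m T') (fun x hx => lt_of_lt_of_le hm0 hx.1))
    have h0 : (0 : ℝ) ∈ Ioo (F m) (F T') := ⟨hFm', by rw [hFT]; exact hc⟩
    obtain ⟨xp, hxp, hxp0⟩ := this h0
    exact ⟨xp, hxp, hxp0⟩
  obtain ⟨xm, ⟨hxm1, hxm2⟩, hxmF⟩ := hIVT1
  obtain ⟨xp, ⟨hxp1, hxp2⟩, hxpF⟩ := hIVT2
  refine ⟨xm, xp, hx00.trans hxm1, hxm2, hxp1, hxp2, hxmF, hxpF, ?_⟩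
  intro x hx hxF
  rcases lt_trichotomy x m with h | h | h
  · left
    exact hanti.injOn ⟨hx, h.le⟩ ⟨hx00.trans hxm1, hxm2.le⟩
      (by show F x = F xm; rw [hxmF]; exact hxF)
  · exfalso; rw [← h] at hFm'; rw [show F x = (0:ℝ) from hxF] at hFm'; exact lt_irrefl (0:ℝ) hFm'
  · right
    exact hmono.injOn (le_of_lt h) (le_of_lt hxp1)
      (by show F x = F xp; rw [hxpF]; exact hxF)

lemma rpow_rpow_eq (x a b c : ℝ) (hx : 0 ≤ x) (h : a * b = c) : (x ^ a) ^ b = x ^ c := by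
  rw [← Real.rpow_mul hx, h]


set_option maxHeartbeats 1000000 in
theorem two_solutions_precritical (n d : ℕ) (hd : 0 < d) (hdn : d < n)
    (T : ℝ) (hT : 0 < T) (t : ℂ) (ht0 : 0 < ‖t‖)
    (htcr : ‖t‖ <
      ((n : ℝ) / d) * (T / (2 * (n : ℝ) - d)) ^ ((2 * (n : ℝ) - d) / (2 * n))) :
    ∃ rm rp : ℝ,
      rm ^ (4 * (n : ℝ) / d - 2) - (T / n) * rm ^ (2 * (n : ℝ) / d - 2) +
          (((n : ℝ) - d) / n) * ((d : ℝ) ^ 2 / (n : ℝ) ^ 2) * ‖t‖ ^ 2 = 0 ∧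
      rp ^ (4 * (n : ℝ) / d - 2) - (T / n) * rp ^ (2 * (n : ℝ) / d - 2) +
          (((n : ℝ) - d) / n) * ((d : ℝ) ^ 2 / (n : ℝ) ^ 2) * ‖t‖ ^ 2 = 0 ∧
      0 < rm ∧
      rm < ((T / n) * (((n : ℝ) - d) / (2 * (n : ℝ) - d))) ^ ((d : ℝ) / (2 * n)) ∧
      ((T / n) * (((n : ℝ) - d) / (2 * (n : ℝ) - d))) ^ ((d : ℝ) / (2 * n)) < rp ∧
      rp < (T / (n : ℝ)) ^ ((d : ℝ) / (2 * n)) ∧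
      ∀ r : ℝ, 0 < r →
        r ^ (4 * (n : ℝ) / d - 2) - (T / n) * r ^ (2 * (n : ℝ) / d - 2) +
            (((n : ℝ) - d) / n) * ((d : ℝ) ^ 2 / (n : ℝ) ^ 2) * ‖t‖ ^ 2 = 0 →
          r = rm ∨ r = rp := by
  have hD : (0:ℝ) < d := by exact_mod_cast hd
  have hN : (0:ℝ) < n := hD.trans (by exact_mod_cast hdn)
  have hDN : (d:ℝ) < n := by exact_mod_cast hdn
  set p : ℝ := (d:ℝ) / n with hp
  set T' : ℝ := T / n with hT'def
  set c : ℝ := (((n : ℝ) - d) / n) * ((d : ℝ) ^ 2 / (n : ℝ) ^ 2) * ‖t‖ ^ 2 with hcdef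
  have hp0 : 0 < p := by positivity
  have hp1 : p < 1 := by rw [hp, div_lt_one hN]; exact hDN
  have h1p : 0 < 1 - p := by linarith
  have h2p : 0 < 2 - p := by linarith
  have hT'pos : 0 < T' := by positivity
  have hc : 0 < c := by
    rw [hcdef]
    have : (0:ℝ) < (n:ℝ) - d := by linarith
    exact mul_pos (mul_pos (div_pos this hN) (by positivity)) (pow_pos ht0 2)
  set q : ℝ := T / (2 * (n:ℝ) - d) with hqdef
  have h2nd : (0:ℝ) < 2 * n - d := by linarith
  have hq0 : 0 < q := by positivity
  have hqe : q = T' / (2 - p) := by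
    rw [hqdef, hT'def, hp]; field_simp
  -- the m of F_aux equals the statement's base
  have hmeq : T' * ((1 - p) / (2 - p)) = (T / n) * (((n : ℝ) - d) / (2 * (n : ℝ) - d)) := by
    rw [hT'def, hp]
    field_simp

  -- key inequality : F m < 0
  have hkey : (T' * ((1 - p) / (2 - p))) ^ (2 - p)
      - T' * (T' * ((1 - p) / (2 - p))) ^ (1 - p) + c < 0 := by
    set m : ℝ := T' * ((1 - p) / (2 - p)) with hm
    have hm0 : 0 < m := by positivity
    have hmq : m = (1 - p) * q := by rw [hqe, hm]; ring
    have hmm : m ^ (2 - p) = m * m ^ (1 - p) := by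
      rw [show (2 - p : ℝ) = 1 + (1 - p) by ring, Real.rpow_add hm0, Real.rpow_one]
    have hmT : m - T' = -q := by rw [hqe, hm]; field_simp; ring
    have e1 : m ^ (2 - p) - T' * m ^ (1 - p) + c = c - q * m ^ (1 - p) := by
      rw [hmm]
      have : (m - T') * m ^ (1 - p) = -q * m ^ (1 - p) := by rw [hmT]
      nlinarith [this]
    rw [e1, sub_neg]
    -- c < q * m^(1-p)
    have hmpow : m ^ (1 - p) = (1 - p) ^ (1 - p) * q ^ (1 - p) := by
      rw [hmq, Real.mul_rpow h1p.le hq0.le]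
    have h1pp : (1 - p) ^ (1 - p) = (1 - p) * (1 - p) ^ (-p) := by
      have h' : (1 - p) * (1 - p) ^ (-p) = (1 - p) ^ (1:ℝ) * (1 - p) ^ (-p) := by
        rw [Real.rpow_one]
      rw [h', ← Real.rpow_add h1p]
      ring_nf
    have hq2p : q * q ^ (1 - p) = q ^ (2 - p) := by
      rw [show (2 - p : ℝ) = 1 + (1 - p) by ring, Real.rpow_add hq0, Real.rpow_one]
    have hrhs : q * m ^ (1 - p) = (1 - p) * ((1 - p) ^ (-p) * q ^ (2 - p)) := by
      rw [hmpow, h1pp, ← hq2p]; ring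
    -- c = (1-p) * (p^2 * |t|^2)
    have hceq : c = (1 - p) * (p ^ 2 * ‖t‖ ^ 2) := by
      rw [hcdef, hp]
      field_simp
    rw [hceq, hrhs]
    apply mul_lt_mul_of_pos_left _ h1p
    -- p^2 |t|^2 < (1-p)^{-p} q^{2-p}
    have h1 : p ^ 2 * ‖t‖ ^ 2 < q ^ (2 - p) := by
      have htcr' : ‖t‖ < (1 / p) * q ^ ((2 - p) / 2) := by
        have e2 : ((n : ℝ) / d) = 1 / p := by rw [hp]; field_simp
        have e3 : ((2 * (n : ℝ) - d) / (2 * n)) = (2 - p) / 2 := by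
          rw [hp]; field_simp
        rw [← e2, ← e3]; exact htcr
      have hsq : ‖t‖ ^ 2 < ((1 / p) * q ^ ((2 - p) / 2)) ^ 2 :=
        pow_lt_pow_left₀ htcr' (norm_nonneg t) two_ne_zero
      have e4 : ((1 / p) * q ^ ((2 - p) / 2)) ^ 2 = (1 / p ^ 2) * q ^ (2 - p) := by
        rw [mul_pow, ← Real.rpow_natCast (q ^ ((2 - p)/2)) 2, ← Real.rpow_mul hq0.le]
        norm_num
      rw [e4] at hsq
      calc p ^ 2 * ‖t‖ ^ 2 < p ^ 2 * ((1 / p ^ 2) * q ^ (2 - p)) :=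
            mul_lt_mul_of_pos_left hsq (by positivity)
        _ = q ^ (2 - p) := by field_simp
    have h2 : q ^ (2 - p) ≤ (1 - p) ^ (-p) * q ^ (2 - p) := by
      apply le_mul_of_one_le_left (Real.rpow_pos_of_pos hq0 _).le
      exact Real.one_le_rpow_of_pos_of_le_one_of_nonpos h1p (by linarith) (by linarith)
    linarith
  -- apply the auxiliary lemma
  obtain ⟨xm, xp, hxm0, hxmm, hxpm, hxpT, hFxm, hFxp, huniq⟩ :=
    F_aux T' c p hp0 hp1 hT'pos hc hkey
  have hd0 : (d:ℝ) ≠ 0 := hD.ne'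
  have hn0 : (n:ℝ) ≠ 0 := hN.ne'
  have hEpos : 0 < (d:ℝ) / (2 * n) := by positivity
  have hab1 : (d:ℝ) / (2 * n) * (4 * (n:ℝ) / d - 2) = 2 - p := by
    rw [hp]; field_simp; ring
  have hab2 : (d:ℝ) / (2 * n) * (2 * (n:ℝ) / d - 2) = 1 - p := by
    rw [hp]; field_simp
  have hba1 : (2 * (n:ℝ) / d) * (2 - p) = 4 * (n:ℝ) / d - 2 := by
    rw [hp]; field_simp; ring
  have hba2 : (2 * (n:ℝ) / d) * (1 - p) = 2 * (n:ℝ) / d - 2 := by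
    rw [hp]; field_simp
  have hinv : (2 * (n:ℝ) / d) * ((d:ℝ) / (2 * n)) = 1 := by field_simp
  have key_eq : ∀ x : ℝ, 0 < x →
      (x ^ ((d:ℝ) / (2 * n))) ^ (4 * (n:ℝ) / d - 2)
        - T' * (x ^ ((d:ℝ) / (2 * n))) ^ (2 * (n:ℝ) / d - 2) + c
      = x ^ (2 - p) - T' * x ^ (1 - p) + c := by
    intro x hx
    rw [rpow_rpow_eq x _ _ _ hx.le hab1, rpow_rpow_eq x _ _ _ hx.le hab2]
  refine ⟨xm ^ ((d:ℝ) / (2 * n)), xp ^ ((d:ℝ) / (2 * n)), ?_, ?_, ?_, ?_, ?_, ?_, ?_⟩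
  · rw [key_eq xm hxm0]; exact hFxm
  · rw [key_eq xp (lt_trans hxm0 (hxmm.trans hxpm))]; exact hFxp
  · exact Real.rpow_pos_of_pos hxm0 _
  · rw [← hmeq]
    exact Real.rpow_lt_rpow hxm0.le hxmm hEpos
  · rw [← hmeq]
    exact Real.rpow_lt_rpow (by positivity) hxpm hEpos
  · exact Real.rpow_lt_rpow (hxm0.trans (hxmm.trans hxpm)).le hxpT hEpos
  · intro r hr hre
    have hx : 0 < r ^ (2 * (n:ℝ) / d) := Real.rpow_pos_of_pos hr _
    have hFx : (r ^ (2 * (n:ℝ) / d)) ^ (2 - p)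
        - T' * (r ^ (2 * (n:ℝ) / d)) ^ (1 - p) + c = 0 := by
      rw [rpow_rpow_eq r _ _ _ hr.le hba1, rpow_rpow_eq r _ _ _ hr.le hba2]
      exact hre
    have hrid : (r ^ (2 * (n:ℝ) / d)) ^ ((d:ℝ) / (2 * n)) = r := by
      rw [rpow_rpow_eq r _ _ _ hr.le hinv, Real.rpow_one]
    rcases huniq _ hx hFx with h | h
    · left; rw [← h, hrid]
    · right; rw [← h, hrid]
end

section
/- Let n and d be positive integers with 0 < d < n, let T > 0, and let t ∈ ℂ satisfy 0 < |t| < t_cr, where t_cr = (n/d)·(T/(2n−d))^{(2n−d)/(2n)}. Let r_− < r_+ be the two solutions in (0, ∞) of r^{4n/d − 2} − (T/n)·r^{2n/d − 2} + ((n−d)/n)·(d²/n²)·|t|² = 0. Then (d/n)·|t|·r_+^{1 − 2n/d} < 1 and (d/n)·|t|·r_−^{1 − 2n/d} > 1; that is, the parameter α = −(d/n)·t̄·r^{1 − 2n/d} satisfies |α| < 1 for r = r_+ and |α| > 1 for r = r_−. -/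
lemma key_eq (N D T a r : ℝ) (hN : 0 < N) (hD : 0 < D) (hr : 0 < r)
    (heq : r ^ (4 * N / D - 2) - (T / N) * r ^ (2 * N / D - 2) +
      ((N - D) / N) * (D ^ 2 / N ^ 2) * a ^ 2 = 0) :
    r ^ (2 * N / D) * (1 + ((N - D) / N) * ((D / N) * a * r ^ (1 - 2 * N / D)) ^ 2) = T / N := by
  have hP : (0:ℝ) < r ^ (2 * N / D) := Real.rpow_pos_of_pos hr _
  have hA : r ^ (4 * N / D - 2) = r ^ (2 * N / D) * r ^ (2 * N / D) * (r * r)⁻¹ := by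
    rw [show (4 * N / D - 2 : ℝ) = 2 * N / D + (2 * N / D + (-1 + -1)) by ring,
      Real.rpow_add hr, Real.rpow_add hr, Real.rpow_add hr, Real.rpow_neg_one]
    ring
  have hB : r ^ (2 * N / D - 2) = r ^ (2 * N / D) * (r * r)⁻¹ := by
    rw [show (2 * N / D - 2 : ℝ) = 2 * N / D + (-1 + -1) by ring,
      Real.rpow_add hr, Real.rpow_add hr, Real.rpow_neg_one]
    ring
  have hQ : r ^ (1 - 2 * N / D) * r ^ (1 - 2 * N / D)
      = r * r * (r ^ (2 * N / D))⁻¹ * (r ^ (2 * N / D))⁻¹ := by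
    rw [show (1 - 2 * N / D : ℝ) = 1 + -(2 * N / D) by ring, Real.rpow_add hr,
      Real.rpow_one, Real.rpow_neg hr.le]
    ring
  rw [hA, hB] at heq
  have hgoal : ((D / N) * a * r ^ (1 - 2 * N / D)) ^ 2
      = (D / N) ^ 2 * a ^ 2 * (r * r * (r ^ (2 * N / D))⁻¹ * (r ^ (2 * N / D))⁻¹) := by
    rw [← hQ]; ring
  rw [hgoal]
  have hr' : r ≠ 0 := hr.ne'
  have hP' : r ^ (2 * N / D) ≠ 0 := hP.ne'
  field_simp at heq ⊢
  apply mul_right_cancel₀ (show r * r ≠ 0 by positivity)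
  linear_combination (r * r) * heq

set_option maxHeartbeats 1000000 in
theorem alpha_modulus_precritical (n d : ℕ) (hd : 0 < d) (hdn : d < n)
    (T : ℝ) (hT : 0 < T) (t : ℂ) (ht0 : 0 < ‖t‖)
    (htcr : ‖t‖ <
      ((n : ℝ) / d) * (T / (2 * (n : ℝ) - d)) ^ ((2 * (n : ℝ) - d) / (2 * n)))
    (rm rp : ℝ) (hrm0 : 0 < rm)
    (hrmEq : rm ^ (4 * (n : ℝ) / d - 2) - (T / n) * rm ^ (2 * (n : ℝ) / d - 2) +
        (((n : ℝ) - d) / n) * ((d : ℝ) ^ 2 / (n : ℝ) ^ 2) * ‖t‖ ^ 2 = 0)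
    (hrpEq : rp ^ (4 * (n : ℝ) / d - 2) - (T / n) * rp ^ (2 * (n : ℝ) / d - 2) +
        (((n : ℝ) - d) / n) * ((d : ℝ) ^ 2 / (n : ℝ) ^ 2) * ‖t‖ ^ 2 = 0)
    (hlt : rm < ((T / n) * (((n : ℝ) - d) / (2 * (n : ℝ) - d))) ^ ((d : ℝ) / (2 * n)))
    (hgt : ((T / n) * (((n : ℝ) - d) / (2 * (n : ℝ) - d))) ^ ((d : ℝ) / (2 * n)) < rp) :
    ((d : ℝ) / n) * ‖t‖ * rp ^ (1 - 2 * (n : ℝ) / d) < 1 ∧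
    1 < ((d : ℝ) / n) * ‖t‖ * rm ^ (1 - 2 * (n : ℝ) / d) := by
  have hD : (0:ℝ) < d := by exact_mod_cast hd
  have hN : (0:ℝ) < n := by exact_mod_cast hd.trans hdn
  have hDN : (d:ℝ) < n := by exact_mod_cast hdn
  have h2ND : (0:ℝ) < 2 * (n:ℝ) - d := by linarith
  set a := ‖t‖ with ha_def
  have hRS : (0:ℝ) < (T / n) * (((n : ℝ) - d) / (2 * (n : ℝ) - d)) := by
    apply mul_pos (by positivity)
    apply div_pos (by linarith) h2ND
  set RS := (T / n) * (((n : ℝ) - d) / (2 * (n : ℝ) - d)) with hRS_def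
  have hrp0 : 0 < rp := lt_trans (Real.rpow_pos_of_pos hRS _) hgt
  set um := ((d : ℝ) / n) * a * rm ^ (1 - 2 * (n : ℝ) / d) with hum_def
  set up := ((d : ℝ) / n) * a * rp ^ (1 - 2 * (n : ℝ) / d) with hup_def
  have hum0 : 0 < um := by rw [hum_def]; positivity
  have hup0 : 0 < up := by rw [hup_def]; positivity
  have hm := key_eq (n:ℝ) (d:ℝ) T a rm hN hD hrm0 hrmEq
  have hp := key_eq (n:ℝ) (d:ℝ) T a rp hN hD hrp0 hrpEq
  rw [← hum_def] at hm
  rw [← hup_def] at hp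
  have hexp1 : ((d:ℝ) / (2 * n)) * (2 * (n:ℝ) / d) = 1 := by field_simp
  -- Xm < RS
  have hXm : rm ^ (2 * (n:ℝ) / d) < RS := by
    have h1 : rm ^ (2 * (n:ℝ) / d) < (RS ^ ((d:ℝ) / (2 * n))) ^ (2 * (n:ℝ) / d) :=
      Real.rpow_lt_rpow hrm0.le hlt (by positivity)
    rwa [← Real.rpow_mul hRS.le, hexp1, Real.rpow_one] at h1
  -- RS < Xp
  have hXp : RS < rp ^ (2 * (n:ℝ) / d) := by
    have h1 : (RS ^ ((d:ℝ) / (2 * n))) ^ (2 * (n:ℝ) / d) < rp ^ (2 * (n:ℝ) / d) :=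
      Real.rpow_lt_rpow (by positivity) hgt (by positivity)
    rwa [← Real.rpow_mul hRS.le, hexp1, Real.rpow_one] at h1
  have hXm0 : (0:ℝ) < rm ^ (2 * (n:ℝ) / d) := Real.rpow_pos_of_pos hrm0 _
  have hXp0 : (0:ℝ) < rp ^ (2 * (n:ℝ) / d) := Real.rpow_pos_of_pos hrp0 _
  have hc : (0:ℝ) < ((n:ℝ) - d) / n := by apply div_pos (by linarith) hN
  have hSm0 : (0:ℝ) < 1 + (((n:ℝ) - d) / n) * um ^ 2 := by positivity
  have hSp0 : (0:ℝ) < 1 + (((n:ℝ) - d) / n) * up ^ 2 := by positivity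
  clear_value a RS um up
  have hn' : (n:ℝ) ≠ 0 := hN.ne'
  have hd' : (d:ℝ) ≠ 0 := hD.ne'
  have hnd' : (n:ℝ) - d ≠ 0 := by intro h; linarith [h]
  have hnd0 : (0:ℝ) < (n:ℝ) - d := by linarith
  have h2nd' : 2 * (n:ℝ) - d ≠ 0 := h2ND.ne'
  have hTN : RS * ((2 * (n:ℝ) - d) / ((n:ℝ) - d)) = T / n := by
    rw [hRS_def]; field_simp; exact div_self (by intro h; linarith)
  constructor
  · -- up < 1
    -- first: 1 + c up² < (2n-d)/(n-d), giving (n-d)·up < n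
    have h5 : RS * (1 + (((n:ℝ) - d) / n) * up ^ 2) < RS * ((2 * (n:ℝ) - d) / ((n:ℝ) - d)) := by
      rw [hTN, ← hp]
      exact mul_lt_mul_of_pos_right hXp hSp0
    have h6 : 1 + (((n:ℝ) - d) / n) * up ^ 2 < (2 * (n:ℝ) - d) / ((n:ℝ) - d) :=
      (mul_lt_mul_iff_right₀ hRS).mp h5
    have e1 : (n:ℝ) * ((n:ℝ) - d) * ((2 * (n:ℝ) - d) / ((n:ℝ) - d)) = (n:ℝ) * (2 * (n:ℝ) - d) := by
      field_simp
    have e2 : (n:ℝ) * ((n:ℝ) - d) * (1 + (((n:ℝ) - d) / n) * up ^ 2)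
        = (n:ℝ) * ((n:ℝ) - d) + ((n:ℝ) - d) ^ 2 * up ^ 2 := by
      field_simp
    have h6' : (n:ℝ) * ((n:ℝ) - d) + ((n:ℝ) - d) ^ 2 * up ^ 2 < (n:ℝ) * (2 * (n:ℝ) - d) := by
      have := mul_lt_mul_of_pos_left h6 (mul_pos hN (show (0:ℝ) < (n:ℝ) - d by linarith))
      rw [e1, e2] at this; exact this
    have hupc : ((n:ℝ) - d) * up < (n:ℝ) := by
      by_contra hcc
      push_neg at hcc
      have h8 : (n:ℝ) * (n:ℝ) ≤ ((n:ℝ) - d) * up * (((n:ℝ) - d) * up) :=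
        mul_le_mul hcc hcc hN.le (hN.le.trans hcc)
      have h9 : ((n:ℝ) - d) ^ 2 * up ^ 2 = ((n:ℝ) - d) * up * (((n:ℝ) - d) * up) := by ring
      rw [h9] at h6'
      linarith [h6', h8]
    -- now the rpow argument
    by_contra hcon
    push_neg at hcon
    set β := (2 * (n:ℝ) - d) / (2 * n) with hβ_def
    have hβ0 : 0 < β := by positivity
    have hβinv : 1 ≤ 1 / β := by
      rw [le_div_iff₀ hβ0, one_mul, hβ_def, div_le_one (by positivity)]; linarith
    set K := T / (2 * (n:ℝ) - d) with hK_def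
    have hK0 : 0 < K := by positivity
    clear_value β K
    -- (d/n) a < K^β
    have htcr' : ((d:ℝ) / n) * a < K ^ β := by
      have h := mul_lt_mul_of_pos_left htcr (show (0:ℝ) < (d:ℝ)/n by positivity)
      calc ((d:ℝ)/n) * a < ((d:ℝ)/n) * (((n:ℝ)/d) * K ^ β) := h
        _ = K ^ β := by field_simp
    -- up * Xp^β = (d/n) a
    have hpow : rp ^ (2 * (n:ℝ) / d - 1) = (rp ^ (2 * (n:ℝ) / d)) ^ β := by
      rw [← Real.rpow_mul hrp0.le, show (2 * (n:ℝ) / d) * β = 2 * (n:ℝ) / d - 1 by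
        rw [hβ_def]; field_simp]
    have hfac : up * rp ^ (2 * (n:ℝ) / d - 1) = ((d:ℝ) / n) * a := by
      rw [hup_def, mul_assoc, mul_assoc, ← Real.rpow_add hrp0,
        show (1 - 2 * (n:ℝ) / d) + (2 * (n:ℝ) / d - 1) = 0 by ring, Real.rpow_zero, mul_one]
    have hXp_eq : rp ^ (2 * (n:ℝ) / d) = (T / n) / (1 + (((n:ℝ) - d) / n) * up ^ 2) := by
      rw [eq_div_iff hSp0.ne']; exact hp
    -- claim : K^β ≤ up * Xp^β
    have hq : (n:ℝ) + ((n:ℝ) - d) * up ^ 2 ≤ (2 * (n:ℝ) - d) * up := by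
      have hqq := mul_nonneg (show (0:ℝ) ≤ up - 1 by linarith)
        (show (0:ℝ) ≤ (n:ℝ) - ((n:ℝ) - d) * up by linarith)
      have hqq2 : (up - 1) * ((n:ℝ) - ((n:ℝ) - d) * up)
          = (2 * (n:ℝ) - d) * up - (n:ℝ) - ((n:ℝ) - d) * up ^ 2 := by ring
      rw [hqq2] at hqq
      linarith
    have hKle : K ≤ up * rp ^ (2 * (n:ℝ) / d) := by
      have h1 := mul_le_mul_of_nonneg_left hq (show (0:ℝ) ≤ T / ((n:ℝ) * (2 * (n:ℝ) - d)) by positivity)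
      have e3 : T / ((n:ℝ) * (2 * (n:ℝ) - d)) * ((n:ℝ) + ((n:ℝ) - d) * up ^ 2)
          = K * (1 + (((n:ℝ) - d) / n) * up ^ 2) := by rw [hK_def]; field_simp
      have e4 : T / ((n:ℝ) * (2 * (n:ℝ) - d)) * ((2 * (n:ℝ) - d) * up) = up * (T / n) := by
        field_simp; exact div_self (by intro h; linarith)
      rw [e3, e4] at h1
      have h8 : up * (T / (n:ℝ)) = up * rp ^ (2 * (n:ℝ) / d) * (1 + (((n:ℝ) - d) / n) * up ^ 2) := by
        rw [← hp]; ring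
      rw [h8] at h1
      exact le_of_mul_le_mul_right h1 hSp0
    have hup1β : up ≤ up ^ ((1:ℝ) / β) := by
      have := Real.rpow_le_rpow_of_exponent_le hcon hβinv
      rwa [Real.rpow_one] at this
    have hKle2 : K ≤ up ^ ((1:ℝ) / β) * rp ^ (2 * (n:ℝ) / d) :=
      le_trans hKle (mul_le_mul_of_nonneg_right hup1β hXp0.le)
    have hfinal : K ^ β ≤ up * (rp ^ (2 * (n:ℝ) / d)) ^ β := by
      have h2 : (up ^ ((1:ℝ) / β) * rp ^ (2 * (n:ℝ) / d)) ^ β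
          = up * (rp ^ (2 * (n:ℝ) / d)) ^ β := by
        rw [Real.mul_rpow (by positivity) hXp0.le, ← Real.rpow_mul hup0.le,
          one_div_mul_cancel hβ0.ne', Real.rpow_one]
      rw [← h2]
      exact Real.rpow_le_rpow hK0.le hKle2 hβ0.le
    rw [← hpow, hfac] at hfinal
    linarith
  · -- 1 < um
    have h5 : RS * ((2 * (n:ℝ) - d) / ((n:ℝ) - d)) < RS * (1 + (((n:ℝ) - d) / n) * um ^ 2) := by
      rw [hTN, ← hm]
      exact mul_lt_mul_of_pos_right hXm hSm0
    have h6 : (2 * (n:ℝ) - d) / ((n:ℝ) - d) < 1 + (((n:ℝ) - d) / n) * um ^ 2 :=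
      (mul_lt_mul_iff_right₀ hRS).mp h5
    have e1 : (n:ℝ) * ((n:ℝ) - d) * ((2 * (n:ℝ) - d) / ((n:ℝ) - d)) = (n:ℝ) * (2 * (n:ℝ) - d) := by
      field_simp
    have e2 : (n:ℝ) * ((n:ℝ) - d) * (1 + (((n:ℝ) - d) / n) * um ^ 2)
        = (n:ℝ) * ((n:ℝ) - d) + ((n:ℝ) - d) ^ 2 * um ^ 2 := by
      field_simp
    have h6' : (n:ℝ) * (2 * (n:ℝ) - d) < (n:ℝ) * ((n:ℝ) - d) + ((n:ℝ) - d) ^ 2 * um ^ 2 := by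
      have := mul_lt_mul_of_pos_left h6 (mul_pos hN (show (0:ℝ) < (n:ℝ) - d by linarith))
      rw [e1, e2] at this; exact this
    by_contra hcon
    push_neg at hcon
    have hum2 : um ^ 2 ≤ 1 := pow_le_one₀ hum0.le hcon
    have h10 : ((n:ℝ) - d) ^ 2 * um ^ 2 ≤ ((n:ℝ) - d) ^ 2 * 1 :=
      mul_le_mul_of_nonneg_left hum2 (sq_nonneg ((n:ℝ) - d))
    have h11 : (d:ℝ) * d < d * n := mul_lt_mul_of_pos_left hDN hD
    have h12 : (0:ℝ) < (d:ℝ) * d := mul_pos hD hD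
    have h13 : (0:ℝ) < (d:ℝ) * n := mul_pos hD hN
    linarith [h6', h10, h11, h12, h13]
end

section
/- Let n and d be positive integers with n < d < 2n, let T > 0, and let t ∈ ℂ. Then the equation r^{4n/d − 2} − (T/n)·r^{2n/d − 2} + ((n−d)/n)·(d²/n²)·|t|² = 0 (with real powers of r) has a unique solution r_0 in (0, ∞). Moreover, if 0 < |t| < t_cr, where t_cr = (n/d)·(T/(2n−d))^{(2n−d)/(2n)}, then (d/n)·|t|·r_0^{1 − 2n/d} < 1. -/
open Real Set

private lemma F_lt_F {a k : ℝ} (ha1 : 1 < a) (ha2 : a < 2) {r1 r2 : ℝ}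
    (h1 : 0 < r1) (h12 : r1 < r2) (hk : k ≤ r1 ^ (2 * a - 2)) :
    r1 ^ (2 - a) * (r1 ^ (2 * a - 2) - k) < r2 ^ (2 - a) * (r2 ^ (2 * a - 2) - k) := by
  have e1 : r1 ^ (2 - a) < r2 ^ (2 - a) := Real.rpow_lt_rpow h1.le h12 (by linarith)
  have e2 : r1 ^ (2 * a - 2) < r2 ^ (2 * a - 2) := Real.rpow_lt_rpow h1.le h12 (by linarith)
  have p1 : 0 < r1 ^ (2 - a) := Real.rpow_pos_of_pos h1 _
  have p2 : 0 < r2 ^ (2 - a) := Real.rpow_pos_of_pos (h1.trans h12) _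
  nlinarith

private lemma k_lt {a k K : ℝ} {s : ℝ} (hK : 0 < K) (hs : 0 < s)
    (hF : s ^ (2 - a) * (s ^ (2 * a - 2) - k) = K) : k < s ^ (2 * a - 2) := by
  by_contra hle
  push_neg at hle
  have p : 0 < s ^ (2 - a) := Real.rpow_pos_of_pos hs _
  nlinarith

private lemma main_aux (a k K : ℝ) (ha1 : 1 < a) (ha2 : a < 2) (hk : 0 ≤ k) (hK : 0 < K) :
    ∃ r0 : ℝ, 0 < r0 ∧ r0 ^ (2 - a) * (r0 ^ (2 * a - 2) - k) = K ∧
      ∀ r : ℝ, 0 < r → r ^ (2 - a) * (r ^ (2 * a - 2) - k) = K → r = r0 := by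
  have hexp : 0 < 2 * a - 2 := by linarith
  obtain ⟨s0, hs0, hFs0, hks0⟩ :
      ∃ s0 : ℝ, 0 < s0 ∧ s0 ^ (2 - a) * (s0 ^ (2 * a - 2) - k) ≤ K ∧ k ≤ s0 ^ (2 * a - 2) := by
    rcases hk.eq_or_lt with h0 | h0
    · refine ⟨min 1 K, by positivity, ?_, ?_⟩
      · have h2 : (0:ℝ) < min 1 K := by positivity
        have hprod : (min 1 K) ^ (2 - a) * ((min 1 K) ^ (2 * a - 2) - k)
            = (min 1 K) ^ a := by
          rw [← h0, sub_zero, ← Real.rpow_add h2]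
          congr 1; ring
        rw [hprod]
        calc (min 1 K) ^ a ≤ (min 1 K) ^ (1:ℝ) :=
              Real.rpow_le_rpow_of_exponent_ge h2 (min_le_left _ _) (by linarith)
          _ = min 1 K := Real.rpow_one _
          _ ≤ K := min_le_right _ _
      · rw [← h0]; exact (Real.rpow_pos_of_pos (by positivity) _).le
    · refine ⟨k ^ ((1:ℝ) / (2 * a - 2)), Real.rpow_pos_of_pos h0 _, ?_, ?_⟩
      · have : (k ^ ((1:ℝ) / (2 * a - 2))) ^ (2 * a - 2) = k := by
          rw [← Real.rpow_mul h0.le]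
          rw [show (1:ℝ) / (2 * a - 2) * (2 * a - 2) = 1 from one_div_mul_cancel hexp.ne']
          exact Real.rpow_one _
        rw [this, sub_self, mul_zero]
        exact hK.le
      · rw [← Real.rpow_mul h0.le]
        rw [show (1:ℝ) / (2 * a - 2) * (2 * a - 2) = 1 from one_div_mul_cancel hexp.ne']
        rw [Real.rpow_one]
  set R : ℝ := max s0 (max 1 ((k + K) ^ ((1:ℝ) / (2 * a - 2)))) with hRdef
  have hRs : s0 ≤ R := le_max_left _ _
  have hR1 : (1:ℝ) ≤ R := le_trans (le_max_left _ _) (le_max_right _ _)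
  have hRpos : 0 < R := lt_of_lt_of_le one_pos hR1
  have hRk : k + K ≤ R ^ (2 * a - 2) := by
    have hkK : (0:ℝ) ≤ k + K := by linarith
    have hle : (k + K) ^ ((1:ℝ) / (2 * a - 2)) ≤ R :=
      le_trans (le_max_right _ _) (le_max_right _ _)
    calc k + K = ((k + K) ^ ((1:ℝ) / (2 * a - 2))) ^ (2 * a - 2) := by
          rw [← Real.rpow_mul hkK]
          rw [show (1:ℝ) / (2 * a - 2) * (2 * a - 2) = 1 from one_div_mul_cancel hexp.ne']
          rw [Real.rpow_one]
      _ ≤ R ^ (2 * a - 2) :=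
          Real.rpow_le_rpow (Real.rpow_nonneg hkK _) hle hexp.le
  have hR2a : (1:ℝ) ≤ R ^ (2 - a) := Real.one_le_rpow hR1 (by linarith)
  have hFR : K ≤ R ^ (2 - a) * (R ^ (2 * a - 2) - k) := by nlinarith
  have hcont : ContinuousOn (fun r : ℝ => r ^ (2 - a) * (r ^ (2 * a - 2) - k)) (Icc s0 R) := by
    intro x hx
    have hx0 : x ≠ 0 := (hs0.trans_le hx.1).ne'
    exact (((Real.continuousAt_rpow_const x _ (Or.inl hx0)).mul
      ((Real.continuousAt_rpow_const x _ (Or.inl hx0)).sub continuousAt_const)).continuousWithinAt)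
  have hmem : K ∈ Icc ((fun r : ℝ => r ^ (2 - a) * (r ^ (2 * a - 2) - k)) s0)
      ((fun r : ℝ => r ^ (2 - a) * (r ^ (2 * a - 2) - k)) R) := ⟨hFs0, hFR⟩
  obtain ⟨r0, hr0mem, hFr0⟩ := intermediate_value_Icc hRs hcont hmem
  have hr0 : 0 < r0 := hs0.trans_le hr0mem.1
  have hFr0 : r0 ^ (2 - a) * (r0 ^ (2 * a - 2) - k) = K := hFr0
  refine ⟨r0, hr0, hFr0, ?_⟩
  intro r hr hFr
  have hkr : k < r ^ (2 * a - 2) := k_lt hK hr hFr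
  have hkr0 : k < r0 ^ (2 * a - 2) := k_lt hK hr0 hFr0
  rcases lt_trichotomy r r0 with h | h | h
  · have := F_lt_F ha1 ha2 hr h hkr.le
    rw [hFr, hFr0] at this
    exact absurd this (lt_irrefl K)
  · exact h
  · have := F_lt_F ha1 ha2 hr0 h hkr0.le
    rw [hFr, hFr0] at this
    exact absurd this (lt_irrefl K)

theorem unique_solution_precritical (n d : ℕ) (hnd : n < d) (hdn : d < 2 * n)
    (T : ℝ) (hT : 0 < T) (t : ℂ) :
    ∃ r0 : ℝ, 0 < r0 ∧
      (r0 ^ (4 * (n : ℝ) / d - 2) - (T / n) * r0 ^ (2 * (n : ℝ) / d - 2) +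
          (((n : ℝ) - d) / n) * ((d : ℝ) ^ 2 / (n : ℝ) ^ 2) * ‖t‖ ^ 2 = 0) ∧
      (∀ r : ℝ, 0 < r →
        r ^ (4 * (n : ℝ) / d - 2) - (T / n) * r ^ (2 * (n : ℝ) / d - 2) +
            (((n : ℝ) - d) / n) * ((d : ℝ) ^ 2 / (n : ℝ) ^ 2) * ‖t‖ ^ 2 = 0 →
          r = r0) ∧
      (0 < ‖t‖ →
        ‖t‖ <
          ((n : ℝ) / d) * (T / (2 * (n : ℝ) - d)) ^ ((2 * (n : ℝ) - d) / (2 * n)) →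
        ((d : ℝ) / n) * ‖t‖ * r0 ^ (1 - 2 * (n : ℝ) / d) < 1) := by
  have hn : 0 < n := by omega
  have hd : 0 < d := by omega
  set m := ‖t‖ with hmdef
  set N := (n : ℝ) with hNdef
  set D := (d : ℝ) with hDdef
  have hNpos : 0 < N := by rw [hNdef]; exact_mod_cast hn
  have hDpos : 0 < D := by rw [hDdef]; exact_mod_cast hd
  have hND : N < D := by rw [hNdef, hDdef]; exact_mod_cast hnd
  have hD2N : D < 2 * N := by
    rw [hNdef, hDdef]
    have : (d : ℝ) < ((2 * n : ℕ) : ℝ) := by exact_mod_cast hdn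
    simpa [Nat.cast_mul] using this
  set a := 2 * N / D with ha
  have ha1 : 1 < a := by rw [ha, lt_div_iff₀ hDpos]; linarith
  have ha2 : a < 2 := by rw [ha, div_lt_iff₀ hDpos]; linarith
  set K := T / N with hKdef
  have hK : 0 < K := by rw [hKdef]; positivity
  set k := (D - N) / N * (D ^ 2 / N ^ 2) * m ^ 2 with hkdef
  have hmnonneg : 0 ≤ m := by rw [hmdef]; exact norm_nonneg _
  have hk : 0 ≤ k := by
    rw [hkdef]
    have h1 : (0:ℝ) ≤ (D - N) / N := div_nonneg (by linarith) hNpos.le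
    have h2 : (0:ℝ) ≤ D ^ 2 / N ^ 2 := by positivity
    positivity
  have key : ∀ r : ℝ, 0 < r →
      r ^ (4 * N / D - 2) - K * r ^ (a - 2) + (N - D) / N * (D ^ 2 / N ^ 2) * m ^ 2
        = (r ^ (2 - a) * (r ^ (2 * a - 2) - k) - K) * r ^ (a - 2) := by
    intro r hr
    have hc : (N - D) / N * (D ^ 2 / N ^ 2) * m ^ 2 = -k := by rw [hkdef]; ring
    have h1 : r ^ (4 * N / D - 2) = r ^ (2 * a - 2) := by
      congr 1; rw [ha]; ring
    have hxy : r ^ (2 - a) * r ^ (a - 2) = 1 := by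
      rw [← Real.rpow_add hr]
      norm_num
    rw [hc, h1]
    linear_combination (k - r ^ (2 * a - 2)) * hxy
  obtain ⟨r0, hr0pos, hFr0, huniq⟩ := main_aux a k K ha1 ha2 hk hK
  have hane : r0 ^ (a - 2) ≠ 0 := (Real.rpow_pos_of_pos hr0pos _).ne'
  refine ⟨r0, hr0pos, ?_, ?_, ?_⟩
  · rw [key r0 hr0pos, hFr0, sub_self, zero_mul]
  · intro r hr heq
    apply huniq r hr
    rw [key r hr] at heq
    rcases mul_eq_zero.mp heq with h | h
    · linarith [sub_eq_zero.mp h]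
    · exact absurd h (Real.rpow_pos_of_pos hr _).ne'
  · intro hmpos hmcr
    have ham1 : 0 < a - 1 := by linarith
    have hb : 0 < D / N * m := by positivity
    have h2ND : 0 < 2 * N - D := by linarith
    set β := D / N * m with hβdef
    set rh := β ^ ((1:ℝ) / (a - 1)) with hrhdef
    have hrhpos : 0 < rh := Real.rpow_pos_of_pos hb _
    have hrh2a : rh ^ (2 * a - 2) = β ^ (2:ℝ) := by
      rw [hrhdef, ← Real.rpow_mul hb.le]
      congr 1
      field_simp
    have hrh2 : rh ^ (2 - a) = β ^ ((2 - a) / (a - 1)) := by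
      rw [hrhdef, ← Real.rpow_mul hb.le]
      congr 1
      field_simp
    have hkβ : k = (D - N) / N * β ^ (2:ℝ) := by
      rw [hkdef, hβdef, Real.rpow_two]; field_simp
    have hsum : β ^ ((2 - a) / (a - 1)) * β ^ (2:ℝ) = β ^ (a / (a - 1)) := by
      rw [← Real.rpow_add hb]
      congr 1
      field_simp
      ring
    have hcr' : β < (T / (2 * N - D)) ^ ((a - 1) / a) := by
      have hexpeq : (2 * N - D) / (2 * N) = (a - 1) / a := by
        rw [ha]; field_simp
      rw [hβdef]
      calc D / N * m < D / N * (N / D * (T / (2 * N - D)) ^ ((2 * N - D) / (2 * N))) := by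
            apply mul_lt_mul_of_pos_left hmcr (by positivity)
        _ = (T / (2 * N - D)) ^ ((2 * N - D) / (2 * N)) := by field_simp
        _ = (T / (2 * N - D)) ^ ((a - 1) / a) := by rw [hexpeq]
    have hbound : β ^ (a / (a - 1)) < T / (2 * N - D) := by
      have hX : (0:ℝ) ≤ T / (2 * N - D) := by positivity
      have h1 : β ^ (a / (a - 1)) < ((T / (2 * N - D)) ^ ((a - 1) / a)) ^ (a / (a - 1)) :=
        Real.rpow_lt_rpow hb.le hcr' (by positivity)
      have h2 : ((T / (2 * N - D)) ^ ((a - 1) / a)) ^ (a / (a - 1)) = T / (2 * N - D) := by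
        rw [← Real.rpow_mul hX]
        rw [show (a - 1) / a * (a / (a - 1)) = 1 by field_simp]
        exact Real.rpow_one _
      rwa [h2] at h1
    have hFrh : rh ^ (2 - a) * (rh ^ (2 * a - 2) - k) < K := by
      have hval : rh ^ (2 - a) * (rh ^ (2 * a - 2) - k)
          = β ^ (a / (a - 1)) * ((2 * N - D) / N) := by
        rw [hrh2a, hrh2, hkβ, ← hsum]
        field_simp
        ring
      rw [hval, hKdef]
      calc β ^ (a / (a - 1)) * ((2 * N - D) / N)
          < (T / (2 * N - D)) * ((2 * N - D) / N) := by
            apply mul_lt_mul_of_pos_right hbound (by positivity)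
        _ = T / N := by field_simp
    have hkr0 : k < r0 ^ (2 * a - 2) := k_lt hK hr0pos hFr0
    have hlt : rh < r0 := by
      by_contra hcon
      push_neg at hcon
      rcases hcon.lt_or_eq with h | h
      · have := F_lt_F ha1 ha2 hr0pos h hkr0.le
        rw [hFr0] at this
        linarith
      · rw [h] at hFr0
        linarith [hFr0]
    have hβlt : β < r0 ^ (a - 1) := by
      have h1 : rh ^ (a - 1) < r0 ^ (a - 1) := Real.rpow_lt_rpow hrhpos.le hlt ham1
      have h2 : rh ^ (a - 1) = β := by
        rw [hrhdef, ← Real.rpow_mul hb.le]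
        rw [show (1:ℝ) / (a - 1) * (a - 1) = 1 by field_simp]
        exact Real.rpow_one _
      rwa [h2] at h1
    have hgoalexp : (1:ℝ) - a = -(a - 1) := by ring
    rw [show (1:ℝ) - a = -(a - 1) from by ring, Real.rpow_neg hr0pos.le,
      ← div_eq_mul_inv, div_lt_one (Real.rpow_pos_of_pos hr0pos _)]
    exact hβlt
end

section
/- Let n and d be positive integers with 0 < d < 2n, let T > 0, and let t ∈ ℂ with t ≠ 0. Define the real number r = (T/(2n−d))^{1/2}·((d/n)·|t|)^{(d−n)/(2n−d)} and the complex number α = −(t̄/|t|)·(T/(2n−d))^{1/2}·((d/n)·|t|)^{−n/(2n−d)}. Then r and α satisfy the total mass condition (n/T)·r^{2n/d}·((2n−d)/n)·|α|^{2 − 2n/d} = 1 and the deformation condition −(n/d)·r^{2n/d − 1}·|α|^{−2n/d}·conj(α) = t. -/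
theorem postcritical_parameters_satisfy_conditions (n d : ℕ) (hd : 0 < d) (hdn : d < 2 * n)
    (T : ℝ) (hT : 0 < T) (t : ℂ) (ht : t ≠ 0)
    (r : ℝ) (α : ℂ)
    (hr : r = (T / (2 * (n : ℝ) - d)) ^ ((1 : ℝ) / 2) *
        (((d : ℝ) / n) * ‖t‖) ^ (((d : ℝ) - n) / (2 * (n : ℝ) - d)))
    (hα : α = -((starRingEnd ℂ) t / (‖t‖ : ℂ)) *
        (((T / (2 * (n : ℝ) - d)) ^ ((1 : ℝ) / 2) *
          (((d : ℝ) / n) * ‖t‖) ^ (-(n : ℝ) / (2 * (n : ℝ) - d)) : ℝ) : ℂ)) :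
    ((n : ℝ) / T) * r ^ (2 * (n : ℝ) / d) * ((2 * (n : ℝ) - d) / n) *
        ‖α‖ ^ (2 - 2 * (n : ℝ) / d) = 1 ∧
    ((-((n : ℝ) / d) * r ^ (2 * (n : ℝ) / d - 1) *
        ‖α‖ ^ (-(2 * (n : ℝ) / d)) : ℝ) : ℂ) * (starRingEnd ℂ) α = t := by
  have hn : 0 < n := by omega
  have hnR : (0:ℝ) < n := by exact_mod_cast hn
  have hdR : (0:ℝ) < d := by exact_mod_cast hd
  have hdnR : (d:ℝ) < 2 * n := by exact_mod_cast hdn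
  have hnd : (0:ℝ) < 2 * (n:ℝ) - d := by linarith
  have htabs : 0 < ‖t‖ := by simpa using norm_pos_iff.mpr ht
  set a : ℝ := T / (2 * (n:ℝ) - d) with ha
  have hapos : 0 < a := div_pos hT hnd
  set b : ℝ := ((d:ℝ) / n) * ‖t‖ with hb
  have hbpos : 0 < b := mul_pos (div_pos hdR hnR) htabs
  set c : ℝ := a ^ ((1:ℝ)/2) * b ^ (-(n:ℝ) / (2 * (n:ℝ) - d)) with hc
  have hcpos : 0 < c := mul_pos (Real.rpow_pos_of_pos hapos _) (Real.rpow_pos_of_pos hbpos _)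
  have key : ∀ p x y : ℝ, (a ^ x * b ^ y) ^ p = a ^ (x * p) * b ^ (y * p) := by
    intro p x y
    rw [Real.mul_rpow (Real.rpow_pos_of_pos hapos _).le (Real.rpow_pos_of_pos hbpos _).le,
      ← Real.rpow_mul hapos.le, ← Real.rpow_mul hbpos.le]
  have habs : ‖α‖ = c := by
    rw [hα]
    simp [map_mul, map_neg, map_div₀, Complex.norm_conj, Complex.norm_real,
      abs_of_pos hcpos, div_self htabs.ne']
  constructor
  · rw [hr, habs]
    have hXY : (a ^ ((1:ℝ)/2) * b ^ (((d:ℝ) - n) / (2 * (n:ℝ) - d))) ^ (2 * (n:ℝ) / d) *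
        c ^ (2 - 2 * (n:ℝ) / d) = a := by
      rw [hc, key, key, mul_mul_mul_comm, ← Real.rpow_add hapos, ← Real.rpow_add hbpos]
      have h1 : (1:ℝ)/2 * (2 * (n:ℝ) / d) + (1:ℝ)/2 * (2 - 2 * (n:ℝ) / d) = 1 := by ring
      have h2 : ((d:ℝ) - n) / (2 * (n:ℝ) - d) * (2 * (n:ℝ) / d) +
          -(n:ℝ) / (2 * (n:ℝ) - d) * (2 - 2 * (n:ℝ) / d) = 0 := by
        field_simp
        ring
      rw [h1, h2, Real.rpow_one, Real.rpow_zero, mul_one]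
    rw [show ((n:ℝ) / T) * (a ^ ((1:ℝ)/2) * b ^ (((d:ℝ) - n) / (2 * (n:ℝ) - d))) ^
          (2 * (n:ℝ) / d) * ((2 * (n:ℝ) - d) / n) * c ^ (2 - 2 * (n:ℝ) / d)
        = ((n:ℝ) / T) * ((2 * (n:ℝ) - d) / n) *
          ((a ^ ((1:ℝ)/2) * b ^ (((d:ℝ) - n) / (2 * (n:ℝ) - d))) ^ (2 * (n:ℝ) / d) *
            c ^ (2 - 2 * (n:ℝ) / d)) from by ring, hXY, ha]
    field_simp
    have hne : (n:ℝ) * 2 - d ≠ 0 := by linarith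
    exact div_self hne
  · rw [habs, hα]
    have hconj : (starRingEnd ℂ) (-((starRingEnd ℂ) t / (‖t‖ : ℂ)) * (c:ℂ)) =
        -(t / (‖t‖ : ℂ)) * (c:ℂ) := by
      simp [map_mul, map_div₀]
    rw [hconj]
    have hreal : ((n:ℝ) / d) * r ^ (2 * (n:ℝ) / d - 1) * c ^ (-(2 * (n:ℝ) / d)) * c
        = ‖t‖ := by
      have hc1 : c ^ (-(2 * (n:ℝ) / d)) * c = c ^ (1 - 2 * (n:ℝ) / d) := by
        nth_rewrite 2 [← Real.rpow_one c]
        rw [← Real.rpow_add hcpos]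
        ring_nf
      have hRB : (a ^ ((1:ℝ)/2) * b ^ (((d:ℝ) - n) / (2 * (n:ℝ) - d))) ^ (2 * (n:ℝ) / d - 1)
          * c ^ (1 - 2 * (n:ℝ) / d) = b := by
        rw [hc, key, key, mul_mul_mul_comm, ← Real.rpow_add hapos, ← Real.rpow_add hbpos]
        have h1 : (1:ℝ)/2 * (2 * (n:ℝ) / d - 1) + (1:ℝ)/2 * (1 - 2 * (n:ℝ) / d) = 0 := by ring
        have h2 : ((d:ℝ) - n) / (2 * (n:ℝ) - d) * (2 * (n:ℝ) / d - 1) +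
            -(n:ℝ) / (2 * (n:ℝ) - d) * (1 - 2 * (n:ℝ) / d) = 1 := by
          field_simp
          have hne : (n:ℝ) * 2 - d ≠ 0 := by linarith
          rw [div_eq_iff hne]
          ring
        rw [h1, h2, Real.rpow_one, Real.rpow_zero, one_mul]
      rw [mul_assoc, hc1, hr, mul_assoc, hRB, hb]
      field_simp
    have hx : (-((n:ℝ) / d) * r ^ (2 * (n:ℝ) / d - 1) * c ^ (-(2 * (n:ℝ) / d))) * c
        = -‖t‖ := by linarith [hreal]
    calc ((-((n:ℝ) / d) * r ^ (2 * (n:ℝ) / d - 1) * c ^ (-(2 * (n:ℝ) / d)) : ℝ) : ℂ) *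
          (-(t / (‖t‖ : ℂ)) * (c:ℂ))
        = (((-((n:ℝ) / d) * r ^ (2 * (n:ℝ) / d - 1) * c ^ (-(2 * (n:ℝ) / d))) * c : ℝ) : ℂ) *
          (-(t / (‖t‖ : ℂ))) := by push_cast; ring
      _ = ((-‖t‖ : ℝ) : ℂ) * (-(t / (‖t‖ : ℂ))) := by rw [hx]
      _ = t := by
          push_cast
          have : (‖t‖ : ℂ) ≠ 0 := by exact_mod_cast htabs.ne'
          field_simp
end

section
/- Let n and d be positive integers with 0 < d < 2n, and let α, u ∈ ℂ satisfy |α| < 1 < |u|. Then |u|^{2n/d}·(1 − conj(α)/conj(u)) ≠ 1 − conj(α)·u. -/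
theorem no_critical_point_precritical (n d : ℕ) (hd : 0 < d) (hdn : d < 2 * n)
    (α u : ℂ) (hα : ‖α‖ < 1) (hu : 1 < ‖u‖) :
    ((‖u‖ ^ (2 * (n : ℝ) / d) : ℝ) : ℂ) *
        (1 - (starRingEnd ℂ) α / (starRingEnd ℂ) u) ≠ 1 - (starRingEnd ℂ) α * u := by
  intro h
  set ρ := ‖u‖ with hρdef
  have hρ1 : 1 < ρ := hu
  have hρ0 : 0 < ρ := lt_trans one_pos hρ1
  set r : ℝ := ρ ^ (2 * (n : ℝ) / d) with hrdef
  have he : 1 < 2 * (n : ℝ) / d := by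
    rw [lt_div_iff₀ (by exact_mod_cast hd), one_mul]
    exact_mod_cast hdn
  have hrρ : ρ < r := by
    calc ρ = ρ ^ (1 : ℝ) := (Real.rpow_one ρ).symm
    _ < r := (Real.rpow_lt_rpow_left_iff hρ1).mpr he
  have hr1 : 1 < r := lt_trans hρ1 hrρ
  have hu0 : u ≠ 0 := norm_pos_iff.mp (lt_trans one_pos hu)
  have hcu : (starRingEnd ℂ) u ≠ 0 := by simpa using hu0
  have hmc : u * (starRingEnd ℂ) u = ((ρ ^ 2 : ℝ) : ℂ) := by
    rw [Complex.mul_conj, ← Complex.sq_norm]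
  have E : ((r : ℂ) - 1) * (starRingEnd ℂ) u
      = (starRingEnd ℂ) α * (((r : ℝ) : ℂ) - ((ρ ^ 2 : ℝ) : ℂ)) := by
    field_simp at h
    linear_combination h - (starRingEnd ℂ) α * hmc
  have EA : (r - 1) * ρ = ‖α‖ * |r - ρ ^ 2| := by
    have := congrArg norm E
    rw [norm_mul, norm_mul, Complex.norm_conj, ← Complex.ofReal_sub, Complex.norm_real] at this
    rw [show ((r : ℂ) - 1) = (((r - 1 : ℝ)) : ℂ) by push_cast; ring, Complex.norm_real, Real.norm_eq_abs,
      abs_of_nonneg (by linarith : (0:ℝ) ≤ r - 1)] at this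
    simpa [Complex.norm_conj] using this
  have hb : |r - ρ ^ 2| ≤ ρ * (r - 1) := by
    rw [abs_le]
    constructor <;> nlinarith
  have h1 : ‖α‖ * |r - ρ ^ 2| ≤ ‖α‖ * (ρ * (r - 1)) :=
    mul_le_mul_of_nonneg_left hb (norm_nonneg α)
  have h2 : ‖α‖ * (ρ * (r - 1)) < 1 * (ρ * (r - 1)) :=
    mul_lt_mul_of_pos_right hα (mul_pos hρ0 (by linarith))
  nlinarith [EA, h1, h2]
end

section
/- Let n and d be positive integers and let α ∈ ℂ with |α| < 1. Then (1/(2πi)) · ∮_{|u|=1} (1 − α/u)·(1 − conj(α)·u)·[ (1 − d/n)·(1/u) + (d/n)·(1/(u − α)) ] du = (n + (n − d)·|α|²)/n, where the integral is the counterclockwise contour integral over the unit circle. -/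
open Complex

lemma circleIntegrable_const_mul {f : ℂ → ℂ} {c : ℂ} {R : ℝ} (a : ℂ)
    (hf : CircleIntegrable f c R) : CircleIntegrable (fun z => a * f z) c R := by
  have h : IntervalIntegrable (fun θ : ℝ => f (circleMap c R θ))
      MeasureTheory.volume 0 (2 * Real.pi) := hf
  show IntervalIntegrable (fun θ : ℝ => a * f (circleMap c R θ))
      MeasureTheory.volume 0 (2 * Real.pi)
  exact h.const_mul a

lemma circleIntegral_add {f g : ℂ → ℂ} {c : ℂ} {R : ℝ} (hf : CircleIntegrable f c R)
    (hg : CircleIntegrable g c R) :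
    (∮ z in C(c, R), (f z + g z)) = (∮ z in C(c, R), f z) + ∮ z in C(c, R), g z := by
  simp only [circleIntegral, smul_add, intervalIntegral.integral_add hf.out hg.out]

theorem total_mass_contour_integral_precritical (n d : ℕ) (hn : 0 < n) (hd : 0 < d)
    (α : ℂ) (hα : ‖α‖ < 1) :
    (2 * Real.pi * Complex.I)⁻¹ *
        (∮ u in C(0, 1),
          (1 - α / u) * (1 - (starRingEnd ℂ) α * u) *
            ((1 - (d : ℂ) / n) * u⁻¹ + ((d : ℂ) / n) * (u - α)⁻¹)) =
      ((((n : ℝ) + ((n : ℝ) - d) * ‖α‖ ^ 2) / n : ℝ) : ℂ) := by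
  have hn0 : (n : ℂ) ≠ 0 := Nat.cast_ne_zero.mpr hn.ne'
  set c : ℂ := (d : ℂ) / n with hc
  set K : ℂ := (1 - c) * (1 + (starRingEnd ℂ) α * α) + c with hK
  have key : ∀ u ∈ Metric.sphere (0 : ℂ) 1,
      (1 - α / u) * (1 - (starRingEnd ℂ) α * u) * ((1 - c) * u⁻¹ + c * (u - α)⁻¹)
      = K * (u - 0)⁻¹ + ((-(1 - c) * α) * (u - 0) ^ (-2 : ℤ)
        + (-(starRingEnd ℂ) α) * (u - 0) ^ (0 : ℤ)) := by
    intro u hu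
    have hu1 : ‖u‖ = 1 := by simpa using hu
    have hu0 : u ≠ 0 := by intro h; simp [h] at hu1
    have huα : u - α ≠ 0 := by
      intro h
      rw [sub_eq_zero] at h
      rw [h] at hu1
      exact absurd hu1 (by linarith)
    have hz2 : (u - 0) ^ (-2 : ℤ) = (u ^ 2)⁻¹ := by
      rw [sub_zero, zpow_neg]
      norm_cast
    rw [hz2, sub_zero, zpow_zero, mul_one, hK, hc]
    field_simp
    ring
  rw [circleIntegral.integral_congr zero_le_one key]
  have h1 : (∮ u in C((0:ℂ), 1), (u - 0)⁻¹) = 2 * Real.pi * Complex.I :=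
    circleIntegral.integral_sub_inv_of_mem_ball (by simp)
  have h2 : (∮ u in C((0:ℂ), 1), (u - 0) ^ (-2 : ℤ)) = 0 :=
    circleIntegral.integral_sub_zpow_of_ne (by decide) _ _ _
  have h3 : (∮ u in C((0:ℂ), 1), (u - 0) ^ (0 : ℤ)) = 0 :=
    circleIntegral.integral_sub_zpow_of_ne (by decide) _ _ _
  have j1 : CircleIntegrable (fun z : ℂ => (z - 0)⁻¹) 0 1 := by
    rw [circleIntegrable_sub_inv_iff]; right; simp
  have j2 : CircleIntegrable (fun z : ℂ => (z - 0) ^ (-2 : ℤ)) 0 1 := by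
    rw [circleIntegrable_sub_zpow_iff]; right; right; simp
  have j3 : CircleIntegrable (fun z : ℂ => (z - 0) ^ (0 : ℤ)) 0 1 := by
    rw [circleIntegrable_sub_zpow_iff]; right; left; norm_num
  have i1 := circleIntegrable_const_mul K j1
  have i2 := circleIntegrable_const_mul (-(1 - c) * α) j2
  have i3 := circleIntegrable_const_mul (-(starRingEnd ℂ) α) j3
  have i23 : CircleIntegrable (fun z : ℂ => -(1 - c) * α * (z - 0) ^ (-2 : ℤ)
      + -(starRingEnd ℂ) α * (z - 0) ^ (0 : ℤ)) 0 1 := i2.add i3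
  rw [circleIntegral_add i1 i23, circleIntegral_add i2 i3,
    circleIntegral.integral_const_mul, circleIntegral.integral_const_mul,
    circleIntegral.integral_const_mul, h1, h2, h3]
  have hπ : (2 * (Real.pi : ℂ) * Complex.I) ≠ 0 := by
    simp [Real.pi_ne_zero, Complex.I_ne_zero]
  have hred : (2 * (Real.pi : ℂ) * Complex.I)⁻¹ * (K * (2 * (Real.pi : ℂ) * Complex.I)
      + (-(1 - c) * α * 0 + -(starRingEnd ℂ) α * 0)) = K := by
    field_simp
    ring
  rw [hred, hK, hc]
  have habs : (starRingEnd ℂ) α * α = ((‖α‖ : ℝ) : ℂ) ^ 2 := by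
    rw [mul_comm, Complex.mul_conj, Complex.normSq_eq_norm_sq]
    push_cast; ring
  rw [habs]
  push_cast
  field_simp
  ring
end

section
/- Let d be a positive integer, let r > 0, let Ω = {u ∈ ℂ : |u| > 1}, and let g : Ω → ℂ be holomorphic with g(u) ≠ 0 for all u ∈ Ω and g(u) → 1 as |u| → ∞. Suppose the map f(u) = r·u·g(u) is injective on Ω. Then there exists a holomorphic function h : Ω → ℂ with h(u)^d = g(u^d) for all u ∈ Ω and h(u) → 1 as |u| → ∞, and for any such h the map u ↦ r^{1/d}·u·h(u) is injective on Ω. -/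
open Complex Filter Set Metric intervalIntegral MeasureTheory

lemma exists_log_ball {f : ℂ → ℂ} (hf : DifferentiableOn ℂ f (Metric.ball 0 1))
    (hne : ∀ w ∈ Metric.ball (0:ℂ) 1, f w ≠ 0) (h0 : f 0 = 1) :
    ∃ L : ℂ → ℂ, DifferentiableOn ℂ L (Metric.ball 0 1) ∧ L 0 = 0 ∧
      ∀ w ∈ Metric.ball (0:ℂ) 1, Complex.exp (L w) = f w := by
  set s : Set ℂ := Metric.ball 0 1 with hs_def
  have hs : IsOpen s := Metric.isOpen_ball
  have hfa : AnalyticOnNhd ℂ f s := hf.analyticOnNhd hs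
  set q : ℂ → ℂ := fun z => deriv f z * (f z)⁻¹ with hq_def
  have hqa : AnalyticOnNhd ℂ q s := (hfa.deriv_of_isOpen hs).mul (hfa.inv hne)
  have hqd : DifferentiableOn ℂ q s := hqa.differentiableOn
  have hqc : ContinuousOn q s := hqa.continuousOn
  have hq'a : AnalyticOnNhd ℂ (deriv q) s := hqa.deriv_of_isOpen hs
  have hq'c : ContinuousOn (deriv q) s := hq'a.continuousOn
  -- membership helper
  have hmem : ∀ {w : ℂ}, w ∈ s → ∀ {t : ℝ}, |t| ≤ 1 → (t : ℂ) * w ∈ s := by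
    intro w hw t ht
    simp only [hs_def, mem_ball, dist_zero_right] at hw ⊢
    rw [norm_mul]
    calc ‖(t:ℂ)‖ * ‖w‖ ≤ 1 * ‖w‖ := by
          apply mul_le_mul_of_nonneg_right _ (norm_nonneg w)
          simpa using ht
      _ < 1 := by simpa using hw
  have hcontAux : ∀ p : ℂ → ℂ, ContinuousOn p s → ∀ (w : ℂ) (t : ℝ), (t:ℂ) * w ∈ s →
      ContinuousAt (fun τ : ℝ => p ((τ:ℂ) * w)) t := by
    intro p hp w t hts
    have c1 : ContinuousAt (fun τ : ℝ => (τ:ℂ) * w) t :=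
      (Complex.continuous_ofReal.mul continuous_const).continuousAt
    exact ContinuousAt.comp (x := t) (hp.continuousAt (hs.mem_nhds hts)) c1
  set L : ℂ → ℂ := fun w => ∫ t in (0:ℝ)..1, w * q ((t:ℂ) * w) with hL_def
  refine ⟨L, ?_, ?_, ?_⟩
  · -- differentiability
    intro w₀ hw₀
    have hw₀' : ‖w₀‖ < 1 := by simpa [hs_def, mem_ball, dist_zero_right] using hw₀
    set ρ : ℝ := (1 + ‖w₀‖) / 2 with hρ_def
    set ε : ℝ := (1 - ‖w₀‖) / 2 with hε_def
    have hε : 0 < ε := by simp only [hε_def]; linarith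
    have hρ1 : ρ < 1 := by simp only [hρ_def]; linarith
    have hρ0 : 0 ≤ ρ := by simp only [hρ_def]; positivity
    have hball : Metric.ball w₀ ε ⊆ Metric.closedBall 0 ρ := by
      intro w hw
      simp only [mem_ball, mem_closedBall, dist_zero_right] at hw ⊢
      have := norm_sub_norm_le w w₀
      rw [dist_eq_norm] at hw
      simp only [hρ_def, hε_def] at *
      linarith
    have hsub : Metric.closedBall (0:ℂ) ρ ⊆ s := by
      intro w hw
      simp only [mem_closedBall, dist_zero_right] at hw
      simp only [hs_def, mem_ball, dist_zero_right]
      linarith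
    have hcb : IsCompact (Metric.closedBall (0:ℂ) ρ) := isCompact_closedBall _ _
    obtain ⟨C₁, hC₁⟩ := hcb.exists_bound_of_continuousOn (hqc.mono hsub)
    obtain ⟨C₂, hC₂⟩ := hcb.exists_bound_of_continuousOn (hq'c.mono hsub)
    -- helper: membership of t•w in closedBall 0 ρ
    have hmem2 : ∀ {w : ℂ}, w ∈ Metric.ball w₀ ε → ∀ {t : ℝ}, |t| ≤ 1 →
        (t : ℂ) * w ∈ Metric.closedBall (0:ℂ) ρ := by
      intro w hw t ht
      have hw' : ‖w‖ ≤ ρ := by simpa [mem_closedBall, dist_zero_right] using hball hw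
      simp only [mem_closedBall, dist_zero_right, norm_mul]
      calc ‖(t:ℂ)‖ * ‖w‖ ≤ 1 * ρ := by
            apply mul_le_mul (by simpa using ht) hw' (norm_nonneg w) zero_le_one
        _ = ρ := one_mul ρ
    have hC₂0 : 0 ≤ C₂ := le_trans (norm_nonneg _) (hC₂ 0 (by simp [hρ0]))
    have key := intervalIntegral.hasDerivAt_integral_of_dominated_loc_of_deriv_le
      (𝕜 := ℂ) (μ := volume) (a := (0:ℝ)) (b := 1)
      (F := fun w t => w * q ((t:ℂ) * w))
      (F' := fun w t => q ((t:ℂ) * w) + w * (deriv q ((t:ℂ) * w) * (t:ℂ)))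
      (x₀ := w₀) (bound := fun _ => C₁ + C₂) (Metric.ball_mem_nhds w₀ hε) ?_ ?_ ?_ ?_ ?_ ?_
    · exact (key.2.differentiableAt).differentiableWithinAt
    · -- hF_meas
      filter_upwards [Metric.ball_mem_nhds w₀ hε] with w hw
      apply ContinuousOn.aestronglyMeasurable _ measurableSet_uIoc
      intro t ht
      have ht' : |t| ≤ 1 := by
        rw [Set.uIoc_of_le (by norm_num : (0:ℝ) ≤ 1)] at ht
        rw [abs_le]; constructor <;> [linarith [ht.1]; exact ht.2]
      have hts : (t:ℂ) * w ∈ s := hsub (hmem2 hw ht')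
      exact (continuousAt_const.mul (hcontAux q hqc w t hts)).continuousWithinAt
    · -- hF_int
      apply ContinuousOn.intervalIntegrable
      intro t ht
      rw [Set.uIcc_of_le (by norm_num : (0:ℝ) ≤ 1)] at ht
      have ht' : |t| ≤ 1 := by rw [abs_le]; exact ⟨by linarith [ht.1], ht.2⟩
      have hts : (t:ℂ) * w₀ ∈ s := hmem hw₀ ht'
      exact (continuousAt_const.mul (hcontAux q hqc w₀ t hts)).continuousWithinAt
    · -- hF'_meas
      apply ContinuousOn.aestronglyMeasurable _ measurableSet_uIoc
      intro t ht
      have ht' : |t| ≤ 1 := by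
        rw [Set.uIoc_of_le (by norm_num : (0:ℝ) ≤ 1)] at ht
        rw [abs_le]; constructor <;> [linarith [ht.1]; exact ht.2]
      have hts : (t:ℂ) * w₀ ∈ s := hmem hw₀ ht'
      exact ((hcontAux q hqc w₀ t hts).add (continuousAt_const.mul
        ((hcontAux (deriv q) hq'c w₀ t hts).mul
          Complex.continuous_ofReal.continuousAt))).continuousWithinAt
    · -- h_bound
      apply Filter.Eventually.of_forall
      intro t ht w hw
      have ht' : |t| ≤ 1 := by
        rw [Set.uIoc_of_le (by norm_num : (0:ℝ) ≤ 1)] at ht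
        rw [abs_le]; constructor <;> [linarith [ht.1]; exact ht.2]
      have hmemc : (t:ℂ) * w ∈ Metric.closedBall (0:ℂ) ρ := hmem2 hw ht'
      have hw' : ‖w‖ ≤ ρ := by simpa [mem_closedBall, dist_zero_right] using hball hw
      calc ‖q ((t:ℂ) * w) + w * (deriv q ((t:ℂ) * w) * (t:ℂ))‖
          ≤ ‖q ((t:ℂ) * w)‖ + ‖w * (deriv q ((t:ℂ) * w) * (t:ℂ))‖ := norm_add_le _ _
        _ ≤ C₁ + C₂ := by
            gcongr
            · exact hC₁ _ hmemc
            · rw [norm_mul, norm_mul]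
              calc ‖w‖ * (‖deriv q ((t:ℂ)*w)‖ * ‖(t:ℂ)‖) ≤ 1 * (C₂ * 1) := by
                    apply mul_le_mul (le_trans hw' hρ1.le) _ (by positivity) zero_le_one
                    exact mul_le_mul (hC₂ _ hmemc) (by simpa using ht') (norm_nonneg _) hC₂0
                _ = C₂ := by ring
    · exact intervalIntegrable_const
    · -- h_diff
      apply Filter.Eventually.of_forall
      intro t ht w hw
      have ht' : |t| ≤ 1 := by
        rw [Set.uIoc_of_le (by norm_num : (0:ℝ) ≤ 1)] at ht
        rw [abs_le]; constructor <;> [linarith [ht.1]; exact ht.2]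
      have hts : (t:ℂ) * w ∈ s := hsub (hmem2 hw ht')
      have hqw : HasDerivAt q (deriv q ((t:ℂ) * w)) ((t:ℂ) * w) :=
        (hqd.differentiableAt (hs.mem_nhds hts)).hasDerivAt
      have hinner : HasDerivAt (fun z : ℂ => (t:ℂ) * z) (t:ℂ) w := by
        simpa using (hasDerivAt_id w).const_mul (t:ℂ)
      have hcomp : HasDerivAt (fun z : ℂ => q ((t:ℂ) * z))
          (deriv q ((t:ℂ) * w) * (t:ℂ)) w := HasDerivAt.comp w hqw hinner
      have := (hasDerivAt_id w).mul hcomp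
      simpa [one_mul, Pi.mul_def] using this
  · -- L 0 = 0
    show (∫ t in (0:ℝ)..1, (0:ℂ) * q ((t:ℂ) * 0)) = 0
    simp
  · -- exp (L w) = f w
    intro w hw
    set c : ℝ → ℂ := fun t => w * q ((t:ℂ) * w) with hc_def
    set U : Set ℝ := {τ : ℝ | (τ:ℂ) * w ∈ s} with hU_def
    have hUopen : IsOpen U :=
      hs.preimage (Complex.continuous_ofReal.mul continuous_const)
    have hcontU : ∀ t ∈ U, ContinuousAt c t := fun t ht =>
      continuousAt_const.mul (hcontAux q hqc w t ht)
    have hcont : ∀ t : ℝ, |t| ≤ 1 → ContinuousAt c t := fun t ht =>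
      hcontU t (hmem hw ht)
    have hci : ∀ t ∈ Set.Icc (0:ℝ) 1, IntervalIntegrable c volume 0 t := by
      intro t ht
      apply ContinuousOn.intervalIntegrable
      intro τ hτ
      rw [Set.uIcc_of_le ht.1] at hτ
      exact (hcont τ (by rw [abs_le]; exact ⟨by linarith [hτ.1], le_trans hτ.2 ht.2⟩)).continuousWithinAt
    set ψ : ℝ → ℂ := fun t => ∫ τ in (0:ℝ)..t, c τ with hψ_def
    have hψd : ∀ t ∈ Set.Icc (0:ℝ) 1, HasDerivAt ψ (c t) t := by
      intro t ht
      have ht' : |t| ≤ 1 := by rw [abs_le]; exact ⟨by linarith [ht.1], ht.2⟩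
      exact intervalIntegral.integral_hasDerivAt_right (hci t ht)
        (ContinuousAt.stronglyMeasurableAtFilter hUopen hcontU t (hmem hw ht'))
        (hcont t ht')
    set N : ℝ → ℂ := fun t => f ((t:ℂ) * w) * Complex.exp (-ψ t) with hN_def
    have hNd : ∀ t ∈ Set.Icc (0:ℝ) 1, HasDerivAt N 0 t := by
      intro t ht
      have ht' : |t| ≤ 1 := by rw [abs_le]; exact ⟨by linarith [ht.1], ht.2⟩
      have hts : (t:ℂ) * w ∈ s := hmem hw ht'
      have hfA : HasDerivAt f (deriv f ((t:ℂ) * w)) ((t:ℂ) * w) :=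
        (hf.differentiableAt (hs.mem_nhds hts)).hasDerivAt
      have hmc : HasDerivAt (fun z : ℂ => z * w) w (t:ℂ) := hasDerivAt_mul_const w
      have h1 : HasDerivAt (fun τ : ℝ => f ((τ:ℂ) * w)) (deriv f ((t:ℂ) * w) * w) t :=
        (hfA.comp (t:ℂ) hmc).comp_ofReal
      have h2 : HasDerivAt (fun τ : ℝ => Complex.exp (-ψ τ))
          (Complex.exp (-ψ t) * -(c t)) t := ((hψd t ht).neg).cexp
      have := h1.mul h2
      have hfne : f ((t:ℂ) * w) ≠ 0 := hne _ hts
      have hval : deriv f ((t:ℂ) * w) * w * Complex.exp (-ψ t) +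
          f ((t:ℂ) * w) * (Complex.exp (-ψ t) * -(c t)) = 0 := by
        simp only [hc_def, hq_def]
        field_simp
        ring
      rw [hval] at this
      exact this
    have hconst := constant_of_has_deriv_right_zero
      (fun t ht => (hNd t ht).continuousAt.continuousWithinAt)
      (fun t ht => ((hNd t (Set.mem_Icc.2 ⟨ht.1, ht.2.le⟩)).hasDerivWithinAt))
      1 (Set.mem_Icc.2 ⟨zero_le_one, le_refl 1⟩)
    have hN0 : N 0 = 1 := by
      simp [hN_def, hψ_def, h0]
    have hN1 : N 1 = f w * Complex.exp (-(L w)) := by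
      simp only [hN_def, Complex.ofReal_one, one_mul]; rfl
    rw [hN1, hN0] at hconst
    have hexp : Complex.exp (-(L w)) = (Complex.exp (L w))⁻¹ := Complex.exp_neg _
    rw [hexp] at hconst
    field_simp at hconst
    exact hconst.symm

theorem rotated_uniformizing_map_injective (d : ℕ) (hd : 0 < d) (r : ℝ) (hr : 0 < r)
    (g : ℂ → ℂ) (hg : DifferentiableOn ℂ g {u : ℂ | 1 < ‖u‖})
    (hg0 : ∀ u ∈ {u : ℂ | 1 < ‖u‖}, g u ≠ 0)
    (hg1 : Tendsto g (comap (fun u : ℂ => ‖u‖) atTop) (nhds 1))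
    (hf : Set.InjOn (fun u : ℂ => (r : ℂ) * u * g u) {u : ℂ | 1 < ‖u‖}) :
    (∃ h : ℂ → ℂ, DifferentiableOn ℂ h {u : ℂ | 1 < ‖u‖} ∧
        (∀ u ∈ {u : ℂ | 1 < ‖u‖}, h u ^ d = g (u ^ d)) ∧
        Tendsto h (comap (fun u : ℂ => ‖u‖) atTop) (nhds 1)) ∧
    ∀ h : ℂ → ℂ, DifferentiableOn ℂ h {u : ℂ | 1 < ‖u‖} →
      (∀ u ∈ {u : ℂ | 1 < ‖u‖}, h u ^ d = g (u ^ d)) →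
      Tendsto h (comap (fun u : ℂ => ‖u‖) atTop) (nhds 1) →
      Set.InjOn (fun u : ℂ => ((r ^ ((d : ℝ)⁻¹) : ℝ) : ℂ) * u * h u)
        {u : ℂ | 1 < ‖u‖} := by
  have hΩopen : IsOpen {u : ℂ | 1 < ‖u‖} :=
    isOpen_lt continuous_const continuous_norm
  have hΩne : ∀ u ∈ {u : ℂ | 1 < ‖u‖}, u ≠ 0 := by
    intro u hu h0
    rw [h0] at hu
    simp only [Set.mem_setOf_eq, norm_zero] at hu
    linarith
  have hpowΩ : ∀ u ∈ {u : ℂ | 1 < ‖u‖}, u ^ d ∈ {u : ℂ | 1 < ‖u‖} := by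
    intro u hu
    simp only [Set.mem_setOf_eq, norm_pow] at *
    exact one_lt_pow₀ hu hd.ne'
  constructor
  · -- existence
    set gt : ℂ → ℂ := fun w => if w = 0 then 1 else g w⁻¹ with hgt_def
    have hinv_mem : ∀ w : ℂ, w ∈ Metric.ball (0:ℂ) 1 → w ≠ 0 →
        w⁻¹ ∈ {u : ℂ | 1 < ‖u‖} := by
      intro w hw hw0
      simp only [Metric.mem_ball, dist_zero_right] at hw
      simp only [Set.mem_setOf_eq, norm_inv]
      exact (one_lt_inv₀ (norm_pos_iff.mpr hw0)).mpr hw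
    have hgt_eq : ∀ w : ℂ, w ≠ 0 → gt w = g w⁻¹ := by
      intro w hw0; simp [hgt_def, hw0]
    have hgt_diff_p : DifferentiableOn ℂ gt (Metric.ball (0:ℂ) 1 \ {0}) := by
      apply DifferentiableOn.congr (f := fun w => g w⁻¹)
      · intro w hw
        have hw0 : w ≠ 0 := hw.2
        have : w⁻¹ ∈ {u : ℂ | 1 < ‖u‖} := hinv_mem w hw.1 hw0
        exact (((hg.differentiableAt (hΩopen.mem_nhds this)).comp w
          (differentiableAt_inv hw0))).differentiableWithinAt
      · intro w hw; exact hgt_eq w hw.2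
    have hcont0 : ContinuousAt gt 0 := by
      rw [← continuousWithinAt_compl_self]
      have hgt0 : gt 0 = 1 := by simp [hgt_def]
      unfold ContinuousWithinAt
      rw [hgt0]
      have habs : Tendsto (fun u : ℂ => ‖u‖) (nhdsWithin (0:ℂ) {(0:ℂ)}ᶜ) (nhdsWithin 0 (Set.Ioi 0)) := by
        apply tendsto_nhdsWithin_of_tendsto_nhds_of_eventually_within
        · have := (continuous_norm.tendsto (0:ℂ))
          simpa using this.mono_left nhdsWithin_le_nhds
        · filter_upwards [self_mem_nhdsWithin] with w hw
          exact norm_pos_iff.mpr hw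
      have hinvt : Tendsto (fun w : ℂ => w⁻¹) (nhdsWithin (0:ℂ) {(0:ℂ)}ᶜ)
          (comap (fun u : ℂ => ‖u‖) atTop) := by
        rw [tendsto_comap_iff]
        have : ((fun u : ℂ => ‖u‖) ∘ fun w : ℂ => w⁻¹) = fun w : ℂ => (‖w‖)⁻¹ := by
          funext w; simp [norm_inv]
        rw [this]
        exact tendsto_inv_nhdsGT_zero.comp habs
      have : Tendsto (fun w : ℂ => g w⁻¹) (nhdsWithin (0:ℂ) {(0:ℂ)}ᶜ) (nhds 1) :=
        hg1.comp hinvt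
      apply this.congr'
      filter_upwards [self_mem_nhdsWithin] with w hw
      exact (hgt_eq w hw).symm
    have hgt_diff : DifferentiableOn ℂ gt (Metric.ball (0:ℂ) 1) :=
      (Complex.differentiableOn_compl_singleton_and_continuousAt_iff
        (Metric.ball_mem_nhds (0:ℂ) one_pos)).mp ⟨hgt_diff_p, hcont0⟩
    have hgt_ne : ∀ w ∈ Metric.ball (0:ℂ) 1, gt w ≠ 0 := by
      intro w hw
      by_cases hw0 : w = 0
      · simp [hgt_def, hw0]
      · rw [hgt_eq w hw0]
        exact hg0 _ (hinv_mem w hw hw0)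
    have hgt0 : gt 0 = 1 := by simp [hgt_def]
    obtain ⟨L, hLdiff, hL0, hLexp⟩ := exists_log_ball hgt_diff hgt_ne hgt0
    refine ⟨fun u => Complex.exp (L ((u⁻¹) ^ d) / d), ?_, ?_, ?_⟩
    · -- differentiable
      have hmaps : ∀ u ∈ {u : ℂ | 1 < ‖u‖}, (u⁻¹) ^ d ∈ Metric.ball (0:ℂ) 1 := by
        intro u hu
        simp only [Metric.mem_ball, dist_zero_right, norm_pow, norm_inv]
        apply pow_lt_one₀ (by positivity) _ hd.ne'
        exact inv_lt_one_of_one_lt₀ hu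
      have hd1 : DifferentiableOn ℂ (fun u : ℂ => (u⁻¹) ^ d) {u : ℂ | 1 < ‖u‖} :=
        fun u hu => ((differentiableAt_inv (hΩne u hu)).pow d).differentiableWithinAt
      have hd2 : DifferentiableOn ℂ (fun u : ℂ => L ((u⁻¹) ^ d)) {u : ℂ | 1 < ‖u‖} :=
        hLdiff.comp hd1 hmaps
      exact ((hd2.div_const _).cexp)
    · -- pow
      intro u hu
      have hu0 : u ≠ 0 := hΩne u hu
      have hx : (u⁻¹) ^ d ∈ Metric.ball (0:ℂ) 1 := by
        simp only [Metric.mem_ball, dist_zero_right, norm_pow, norm_inv]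
        exact pow_lt_one₀ (by positivity) (inv_lt_one_of_one_lt₀ hu) hd.ne'
      have hx0 : (u⁻¹) ^ d ≠ 0 := pow_ne_zero _ (inv_ne_zero hu0)
      rw [← Complex.exp_nat_mul, mul_div_cancel₀ _ (by exact_mod_cast hd.ne' : (d:ℂ) ≠ 0)]
      rw [hLexp _ hx, hgt_eq _ hx0]
      rw [← inv_pow, inv_inv]
    · -- tendsto
      have t1 : Tendsto (fun u : ℂ => (u⁻¹) ^ d) (comap (fun u : ℂ => ‖u‖) atTop) (nhds 0) := by
        have habs : Tendsto (fun u : ℂ => (‖u‖)⁻¹ ^ d) (comap (fun u : ℂ => ‖u‖) atTop)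
            (nhds 0) := by
          have : Tendsto (fun x : ℝ => x⁻¹ ^ d) atTop (nhds 0) := by
            have h0 : Tendsto (fun x : ℝ => x⁻¹) atTop (nhds 0) := tendsto_inv_atTop_zero
            have := ((continuous_pow d).tendsto (0:ℝ)).comp h0
            simpa [Function.comp_def, zero_pow hd.ne'] using this
          exact this.comp tendsto_comap
        rw [tendsto_zero_iff_norm_tendsto_zero]
        apply habs.congr
        intro u
        simp [norm_pow, norm_inv]
      have t2 : Tendsto L (nhds (0:ℂ)) (nhds 0) := by
        have := (hLdiff.continuousOn.continuousAt
          (Metric.isOpen_ball.mem_nhds (Metric.mem_ball_self one_pos))).tendsto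
        rwa [hL0] at this
      have t3 : Tendsto (fun z : ℂ => Complex.exp (z / d)) (nhds 0) (nhds 1) := by
        have : ContinuousAt (fun z : ℂ => Complex.exp (z / d)) 0 :=
          (Complex.continuous_exp.comp (continuous_id.div_const _)).continuousAt
        simpa using this.tendsto
      exact t3.comp (t2.comp t1)
  · -- injectivity
    intro h hhdiff hhpow hh1 u hu v hv heq
    set c : ℂ := ((r ^ ((d:ℝ)⁻¹) : ℝ) : ℂ) with hc_def
    have hcd : c ^ d = (r : ℂ) := by
      rw [hc_def, ← Complex.ofReal_pow, Real.rpow_inv_natCast_pow hr.le hd.ne']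
    have hcne : c ≠ 0 := by
      simp only [hc_def, ne_eq, Complex.ofReal_eq_zero]
      positivity
    have hune : u ≠ 0 := hΩne u hu
    have hhne : ∀ x ∈ {u : ℂ | 1 < ‖u‖}, h x ≠ 0 := by
      intro x hx hx0
      apply hg0 _ (hpowΩ x hx)
      rw [← hhpow x hx, hx0, zero_pow hd.ne']
    have hgBne : ∀ x ∈ {u : ℂ | 1 < ‖u‖}, g (x ^ d) ≠ 0 :=
      fun x hx => hg0 _ (hpowΩ x hx)
    have heq' : c * u * h u = c * v * h v := heq
    have heqd : u ^ d = v ^ d := by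
      apply hf (hpowΩ u hu) (hpowΩ v hv)
      have e1 : ∀ x ∈ {u : ℂ | 1 < ‖u‖},
          (c * x * h x) ^ d = (r:ℂ) * x ^ d * g (x ^ d) := by
        intro x hx
        rw [mul_pow, mul_pow, hcd, hhpow x hx]
      show (r:ℂ) * u ^ d * g (u ^ d) = (r:ℂ) * v ^ d * g (v ^ d)
      rw [← e1 u hu, ← e1 v hv, heq']
    set ζ : ℂ := v * u⁻¹ with hζ_def
    have hζd : ζ ^ d = 1 := by
      rw [hζ_def, mul_pow, inv_pow, ← heqd]
      exact mul_inv_cancel₀ (pow_ne_zero _ hune)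
    have hζabs : ‖ζ‖ = 1 := by
      have h1 : (‖ζ‖) ^ d = 1 := by
        rw [← norm_pow, hζd, norm_one]
      by_contra hne1
      rcases lt_or_gt_of_ne hne1 with h2 | h2
      · have := pow_lt_one₀ (norm_nonneg ζ) h2 hd.ne'
        rw [h1] at this; exact lt_irrefl _ this
      · have := one_lt_pow₀ h2 hd.ne'
        rw [h1] at this; exact lt_irrefl _ this
    have hveq : v = ζ * u := by
      rw [hζ_def]
      field_simp
    -- membership along rays
    have hray : ∀ (z : ℂ), ‖z‖ = 1 → ∀ t : ℝ, 1 ≤ t →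
        (t:ℂ) * z * u ∈ {u : ℂ | 1 < ‖u‖} := by
      intro z hz t ht
      simp only [Set.mem_setOf_eq, norm_mul, hz, Complex.norm_real, Real.norm_eq_abs,
        _root_.abs_of_nonneg (by linarith : (0:ℝ) ≤ t), mul_one]
      calc 1 < ‖u‖ := hu
        _ ≤ t * ‖u‖ := le_mul_of_one_le_left (norm_nonneg u) ht
    have hray1 : ∀ t : ℝ, 1 ≤ t → (t:ℂ) * u ∈ {u : ℂ | 1 < ‖u‖} := by
      intro t ht
      have := hray 1 norm_one t ht
      simpa using this
    set χ : ℝ → ℂ := fun t => ζ * h ((t:ℂ) * ζ * u) * (h ((t:ℂ) * u))⁻¹ with hχ_def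
    have hhc : ContinuousOn h {u : ℂ | 1 < ‖u‖} := hhdiff.continuousOn
    have hcont_ray : ∀ (z : ℂ), ‖z‖ = 1 → ∀ t : ℝ, 1 ≤ t →
        ContinuousAt (fun τ : ℝ => h ((τ:ℂ) * z * u)) t := by
      intro z hz t ht
      have c1 : ContinuousAt (fun τ : ℝ => (τ:ℂ) * z * u) t :=
        ((Complex.continuous_ofReal.mul continuous_const).mul continuous_const).continuousAt
      exact ContinuousAt.comp (x := t)
        (hhc.continuousAt (hΩopen.mem_nhds (hray z hz t ht))) c1
    have hχcont : ContinuousOn χ (Set.Ici (1:ℝ)) := by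
      intro t ht
      have ht' : (1:ℝ) ≤ t := ht
      have c1 := hcont_ray ζ hζabs t ht'
      have c2 : ContinuousAt (fun τ : ℝ => h ((τ:ℂ) * u)) t := by
        have := hcont_ray 1 norm_one t ht'
        simpa [mul_one] using this
      have c3 : h ((t:ℂ) * u) ≠ 0 := hhne _ (hray1 t ht')
      exact ((continuousAt_const.mul c1).mul (c2.inv₀ c3)).continuousWithinAt
    have hχS : Set.MapsTo χ (Set.Ici (1:ℝ)) {z : ℂ | z ^ d = 1} := by
      intro t ht
      have ht' : (1:ℝ) ≤ t := ht
      have hA : (t:ℂ) * ζ * u ∈ {u : ℂ | 1 < ‖u‖} := hray ζ hζabs t ht'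
      have hB : (t:ℂ) * u ∈ {u : ℂ | 1 < ‖u‖} := hray1 t ht'
      have hBd : ((t:ℂ) * ζ * u) ^ d = ((t:ℂ) * u) ^ d := by
        rw [mul_pow, mul_pow, hζd, mul_one, ← mul_pow]
      simp only [Set.mem_setOf_eq, hχ_def]
      rw [mul_pow, mul_pow, hζd, one_mul, inv_pow, hhpow _ hA, hhpow _ hB, hBd]
      exact mul_inv_cancel₀ (hgBne _ hB)
    have hχ1 : χ 1 = 1 := by
      have : c * u * h u = c * (ζ * u) * h (ζ * u) := by rw [← hveq]; exact heq'
      have h2 : h u = ζ * h (ζ * u) := by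
        apply mul_left_cancel₀ hune
        apply mul_left_cancel₀ hcne
        linear_combination this
      simp only [hχ_def, Complex.ofReal_one, one_mul]
      rw [← h2]
      exact mul_inv_cancel₀ (hhne u hu)
    have hχlim : Tendsto χ atTop (nhds ζ) := by
      have hmem_lim : ∀ (z : ℂ), ‖z‖ = 1 →
          Tendsto (fun t : ℝ => (t:ℂ) * z * u) atTop (comap (fun u : ℂ => ‖u‖) atTop) := by
        intro z hz
        rw [tendsto_comap_iff]
        have heqf : ((fun u : ℂ => ‖u‖) ∘ fun t : ℝ => (t:ℂ) * z * u) = fun t : ℝ =>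
            |t| * ‖u‖ := by
          funext t
          simp [norm_mul, hz, Complex.norm_real]
        rw [heqf]
        exact (tendsto_abs_atTop_atTop).atTop_mul_const (norm_pos_iff.mpr hune)
      have l1 : Tendsto (fun t : ℝ => h ((t:ℂ) * ζ * u)) atTop (nhds 1) :=
        hh1.comp (hmem_lim ζ hζabs)
      have l2 : Tendsto (fun t : ℝ => h ((t:ℂ) * u)) atTop (nhds 1) := by
        have := hh1.comp (hmem_lim 1 norm_one)
        simpa [mul_one, Function.comp_def] using this
      rw [hχ_def]
      have := (l1.const_mul ζ).mul (l2.inv₀ one_ne_zero)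
      simpa using this
    -- χ is constant on Ici 1
    have hSfin : Set.Finite {z : ℂ | z ^ d = 1} := by
      have hpne : (Polynomial.X ^ d - Polynomial.C (1:ℂ)) ≠ 0 :=
        Polynomial.X_pow_sub_C_ne_zero hd 1
      have := Polynomial.finite_setOf_isRoot hpne
      apply Set.Finite.subset this
      intro z hz
      simp only [Set.mem_setOf_eq, Polynomial.IsRoot.def, Polynomial.eval_sub,
        Polynomial.eval_pow, Polynomial.eval_X, Polynomial.eval_C]
      rw [hz]; ring
    haveI := hSfin.to_subtype
    have hχconst : ∀ t : ℝ, 1 ≤ t → χ t = 1 := by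
      intro t ht
      have := IsPreconnected.constant_of_mapsTo (isPreconnected_Ici (a := (1:ℝ)))
        (isDiscrete_iff_discreteTopology.mpr inferInstance) hχcont hχS (Set.mem_Ici.mpr ht) (Set.mem_Ici.mpr le_rfl)
      rw [this, hχ1]
    have hζ1 : ζ = 1 := by
      have : Tendsto χ atTop (nhds 1) := by
        apply Tendsto.congr' _ tendsto_const_nhds
        filter_upwards [eventually_ge_atTop (1:ℝ)] with t ht
        exact (hχconst t ht).symm
      exact tendsto_nhds_unique hχlim this
    rw [hveq, hζ1, one_mul]
end

section
/- Let n and d be positive integers with 0 < d < 2n and let T > 0. Define t_cr = (n/d)·(T/(2n−d))^{(2n−d)/(2n)} and r_cr = (T/(2n−d))^{d/(2n)}. Then r_cr satisfies the conformal radius equation at the critical value, i.e. r_cr^{4n/d − 2} − (T/n)·r_cr^{2n/d − 2} + ((n−d)/n)·(d²/n²)·t_cr² = 0, and moreover (d/n)·t_cr·r_cr^{1 − 2n/d} = 1, i.e. the corresponding parameter α = −(d/n)·t̄·r_cr^{1 − 2n/d} has modulus exactly 1 when |t| = t_cr. -/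
theorem critical_values_satisfy_equations (n d : ℕ) (hd : 0 < d) (hdn : d < 2 * n)
    (T : ℝ) (hT : 0 < T) :
    ((T / (2 * (n : ℝ) - d)) ^ ((d : ℝ) / (2 * n))) ^ (4 * (n : ℝ) / d - 2) -
        (T / n) * ((T / (2 * (n : ℝ) - d)) ^ ((d : ℝ) / (2 * n))) ^ (2 * (n : ℝ) / d - 2) +
        (((n : ℝ) - d) / n) * ((d : ℝ) ^ 2 / (n : ℝ) ^ 2) *
          (((n : ℝ) / d) * (T / (2 * (n : ℝ) - d)) ^ ((2 * (n : ℝ) - d) / (2 * n))) ^ 2 = 0 ∧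
    ((d : ℝ) / n) *
        (((n : ℝ) / d) * (T / (2 * (n : ℝ) - d)) ^ ((2 * (n : ℝ) - d) / (2 * n))) *
        ((T / (2 * (n : ℝ) - d)) ^ ((d : ℝ) / (2 * n))) ^ (1 - 2 * (n : ℝ) / d) = 1 := by
  have hn : 0 < n := by omega
  have hnR : (0:ℝ) < n := by exact_mod_cast hn
  have hdR : (0:ℝ) < d := by exact_mod_cast hd
  have h2nd : (0:ℝ) < 2 * (n:ℝ) - d := by
    have : (d:ℝ) < 2 * n := by exact_mod_cast hdn
    linarith
  set x : ℝ := T / (2 * (n:ℝ) - d) with hxdef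
  have hx : 0 < x := div_pos hT h2nd
  have hnne : (n:ℝ) ≠ 0 := ne_of_gt hnR
  have hdne : (d:ℝ) ≠ 0 := ne_of_gt hdR
  have e1 : (d : ℝ) / (2 * n) * (4 * (n : ℝ) / d - 2) = 1 + (1 - (d:ℝ)/n) := by
    field_simp; ring
  have e2 : (d : ℝ) / (2 * n) * (2 * (n : ℝ) / d - 2) = 1 - (d:ℝ)/n := by
    field_simp
  have e3 : (2 * (n:ℝ) - d) / (2 * n) + (2 * (n:ℝ) - d) / (2 * n) = 1 + (1 - (d:ℝ)/n) := by
    field_simp; ring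
  have e4 : (2 * (n:ℝ) - d) / (2 * n) + (d : ℝ) / (2 * n) * (1 - 2 * (n : ℝ) / d) = 0 := by
    field_simp; ring
  constructor
  · rw [← Real.rpow_mul hx.le, ← Real.rpow_mul hx.le, e1, e2]
    rw [mul_pow, sq (x ^ ((2 * (n:ℝ) - d) / (2 * n))), ← Real.rpow_add hx, e3]
    rw [Real.rpow_add hx, Real.rpow_one]
    set y : ℝ := x ^ (1 - (d:ℝ)/n) with hy
    have hxT : x * (2 * (n:ℝ) - d) = T := by
      rw [hxdef]; field_simp
    field_simp
    rw [← hxT]; field_simp; ring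
  · rw [← Real.rpow_mul hx.le]
    rw [mul_assoc, mul_assoc ((n:ℝ)/d), ← Real.rpow_add hx, e4, Real.rpow_zero, mul_one]
    field_simp
end
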